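/- arXiv:1203.5578 — 4 statements merged into one kernel-verified Lean document; each statement's English description precedes it below -/
import Mathlib

section
/- Let (R, m) be a Noetherian local ring of dimension d, and let J ⊆ I = (J, h) be m-primary ideals of R, where I is generated by J together with one element h. Then e₀(J) − e₀(I) ≤ λ(R/(J : I)) · f₀(J), where e₀ denotes the Hilbert–Samuel multiplicity and f₀(J) is the multiplicity of the special fiber ring ⊕_{n≥0} Jⁿ/mJⁿ. -/
open Filter IsLocalRing Polynomial

/-- The length of an `R`-module `M`, as the Krull dimension of its submodule lattice. -/
noncomputable def mLength (R : Type*) (M : Type*) [CommRing R] [AddCommGroup M] [Module R M] :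
    WithBot ℕ∞ :=
  Order.krullDim (Submodule R M)

/-- The minimal number of generators of a submodule. -/
noncomputable def nu {R M : Type*} [CommRing R] [AddCommGroup M] [Module R M]
    (N : Submodule R M) : ℕ :=
  sInf {n | ∃ s : Finset M, s.card = n ∧ Submodule.span R (s : Set M) = N}

/-- `J` is a reduction of `I`: `J ⊆ I` and `I^(n+1) = J·Iⁿ` for some `n`
(equivalently, `I` is integral over `J`). -/
def IsReduction {R : Type*} [CommRing R] (J I : Ideal R) : Prop :=
  J ≤ I ∧ ∃ n, I ^ (n + 1) = J * I ^ n

/-- The reduction number of `I` with respect to `J`: the least `s` with `I^(s+1) = J·I^s`. -/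
noncomputable def redNum {R : Type*} [CommRing R] (J I : Ideal R) : ℕ :=
  sInf {s | I ^ (s + 1) = J * I ^ s}

/-- `Q` is a minimal reduction of the `m`-primary ideal `I` in a `d`-dimensional local ring:
a reduction of `I` generated by `d` elements (a parameter ideal). -/
def IsMinimalReduction {R : Type*} [CommRing R] (d : ℕ) (Q I : Ideal R) : Prop :=
  IsReduction Q I ∧ ∃ s : Finset R, s.card = d ∧ Q = Ideal.span (s : Set R)

/-- `HasMultiplicity I d e0` : for `n ≫ 0`,
`λ(R/Iⁿ) = e0·C(n+d−1, d) + (terms of degree < d in n)`;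
i.e. `e0 = e₀(I)` is the Hilbert–Samuel multiplicity of `I`. -/
def HasMultiplicity {R : Type*} [CommRing R] (I : Ideal R) (d : ℕ) (e0 : ℤ) : Prop :=
  ∃ (p : Polynomial ℚ) (lam : ℕ → ℕ), p.degree < (d : ℕ) ∧
    (∀ n, mLength R (R ⧸ I ^ n) = lam n) ∧
    ∀ᶠ n : ℕ in atTop,
      (lam n : ℚ) = e0 * ((n + d - 1).choose d) + p.eval (n : ℚ)

/-- `HasHilbertCoeffs I d e0 e1` : for `n ≫ 0`,
`λ(R/Iⁿ) = e0·C(n+d−1, d) − e1·C(n+d−2, d−1) + (terms of degree < d−1 in n)`;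
i.e. `e0 = e₀(I)` and `e1 = e₁(I)` are the first two Hilbert coefficients of `I`. -/
def HasHilbertCoeffs {R : Type*} [CommRing R] (I : Ideal R) (d : ℕ) (e0 e1 : ℤ) : Prop :=
  ∃ (p : Polynomial ℚ) (lam : ℕ → ℕ), p.degree < ((d - 1 : ℕ) : WithBot ℕ) ∧
    (∀ n, mLength R (R ⧸ I ^ n) = lam n) ∧
    ∀ᶠ n : ℕ in atTop,
      (lam n : ℚ) = e0 * ((n + d - 1).choose d) - e1 * ((n + d - 2).choose (d - 1))
        + p.eval (n : ℚ)

/-- `IsFiberMult f d f0` : the function `f` (e.g. `n ↦ ν(Jⁿ)`) agrees for `n ≫ 0` with a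
polynomial of degree `d − 1` in `n` with normalized leading coefficient `f0`. -/
def IsFiberMult (f : ℕ → ℕ) (d : ℕ) (f0 : ℕ) : Prop :=
  ∃ p : Polynomial ℚ, p.degree < ((d - 1 : ℕ) : WithBot ℕ) ∧
    ∀ᶠ n : ℕ in atTop,
      (f n : ℚ) = f0 * ((n + d - 2).choose (d - 1)) + p.eval (n : ℚ)

/-- `f0 = f₀(J)` is the multiplicity of the special fiber ring `⊕ Jⁿ/mJⁿ`, i.e. the
normalized leading coefficient of the polynomial giving `ν(Jⁿ)` for `n ≫ 0`. -/
def HasFiberMult {R : Type*} [CommRing R] (J : Ideal R) (d : ℕ) (f0 : ℕ) : Prop :=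
  IsFiberMult (fun n => nu (J ^ n)) d f0

section AuxLemmas
open Order


open Order

variable {α β : Type*} [Preorder α] [Preorder β]

lemma myHeight_add_one_le {a b : α} (hab : a < b) :
    Order.height a + 1 ≤ Order.height b := by
  rcases eq_or_ne (Order.height a) ⊤ with h | h
  · have := Order.height_mono hab.le
    rw [h] at this ⊢
    simpa using this
  · exact ENat.add_one_le_iff h |>.mpr (Order.height_strictMono hab (lt_top_iff_ne_top.2 h))

lemma myStepAux : ∀ (n : ℕ) (f : ℕ → α) (g : ℕ → β),
    (∀ i < n, f i ≤ f (i+1)) → (∀ i < n, g i ≤ g (i+1)) →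
    (∀ i < n, f i < f (i+1) ∨ g i < g (i+1)) →
    (n : ℕ∞) ≤ Order.height (f n) + Order.height (g n) := by
  intro n
  induction n with
  | zero => intro f g _ _ _; simp
  | succ n ih =>
    intro f g hf hg hs
    have IH := ih f g (fun i hi => hf i (Nat.lt_succ_of_lt hi))
      (fun i hi => hg i (Nat.lt_succ_of_lt hi)) (fun i hi => hs i (Nat.lt_succ_of_lt hi))
    rcases hs n (Nat.lt_succ_self n) with h | h
    · calc ((n+1 : ℕ) : ℕ∞) = (n : ℕ∞) + 1 := by push_cast; ring
        _ ≤ (Order.height (f n) + Order.height (g n)) + 1 := by gcongr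
        _ = (Order.height (f n) + 1) + Order.height (g n) := by ring
        _ ≤ Order.height (f (n+1)) + Order.height (g (n+1)) := by
            gcongr
            · exact myHeight_add_one_le h
            · exact hg n (Nat.lt_succ_self n)
    · calc ((n+1 : ℕ) : ℕ∞) = (n : ℕ∞) + 1 := by push_cast; ring
        _ ≤ (Order.height (f n) + Order.height (g n)) + 1 := by gcongr
        _ = Order.height (f n) + (Order.height (g n) + 1) := by ring
        _ ≤ Order.height (f (n+1)) + Order.height (g (n+1)) := by
            gcongr
            · exact hf n (Nat.lt_succ_self n)
            · exact myHeight_add_one_le h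

/-- length as ℕ∞ -/
noncomputable def myLen (R M : Type*) [CommRing R] [AddCommGroup M] [Module R M] : ℕ∞ :=
  ⨆ (p : LTSeries (Submodule R M)), (p.length : ℕ∞)

section myLen
variable {R M M₂ : Type*} [CommRing R] [AddCommGroup M] [Module R M]
  [AddCommGroup M₂] [Module R M₂]

lemma mLength_eq_myLen : Order.krullDim (Submodule R M) = (myLen R M : WithBot ℕ∞) := by
  rw [Order.krullDim_eq_iSup_length, myLen]

lemma myLen_height_le (N : Submodule R M) : Order.height N ≤ myLen R M := by
  have := Order.height_le_krullDim N
  rw [mLength_eq_myLen] at this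
  exact_mod_cast this

lemma myLen_eq_of_equiv (e : M ≃ₗ[R] M₂) : myLen R M = myLen R M₂ := by
  have h := Order.krullDim_eq_of_orderIso (Submodule.orderIsoMapComap e)
  rw [mLength_eq_myLen, mLength_eq_myLen] at h
  exact_mod_cast h

lemma myLen_le_add (N : Submodule R M) :
    myLen R M ≤ myLen R N + myLen R (M ⧸ N) := by
  refine iSup_le fun p => ?_
  set l := p.length with hl
  have key : (l : ℕ∞) ≤ Order.height (Submodule.comap N.subtype (p ⟨min l l, by omega⟩))
      + Order.height (Submodule.map N.mkQ (p ⟨min l l, by omega⟩)) := by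
    apply myStepAux l (fun i => Submodule.comap N.subtype (p ⟨min i l, by omega⟩))
      (fun i => Submodule.map N.mkQ (p ⟨min i l, by omega⟩))
    · intro i hi
      exact Submodule.comap_mono (le_of_lt (p.strictMono (by simp [Fin.lt_def]; omega)))
    · intro i hi
      exact Submodule.map_mono (le_of_lt (p.strictMono (by simp [Fin.lt_def]; omega)))
    · intro i hi
      by_contra hcon
      push_neg at hcon
      obtain ⟨h1, h2⟩ := hcon
      set a := p ⟨min i l, by omega⟩ with ha
      set b := p ⟨min (i+1) l, by omega⟩ with hb
      have hab : a < b := p.strictMono (by simp [Fin.lt_def]; omega)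
      have h1' : a ⊓ N = b ⊓ N := by
        have : Submodule.comap N.subtype a = Submodule.comap N.subtype b :=
          ((Submodule.comap_mono hab.le).lt_or_eq).resolve_left h1
        have := congrArg (Submodule.map N.subtype) this
        rwa [Submodule.map_comap_subtype, Submodule.map_comap_subtype, inf_comm N a,
          inf_comm N b] at this
      have h2' : a ⊔ N = b ⊔ N := by
        have : Submodule.map N.mkQ a = Submodule.map N.mkQ b :=
          ((Submodule.map_mono hab.le).lt_or_eq).resolve_left h2
        have := congrArg (Submodule.comap N.mkQ) this
        rwa [Submodule.comap_map_mkQ, Submodule.comap_map_mkQ, sup_comm N a, sup_comm N b]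
          at this
      exact hab.ne (eq_of_le_of_inf_le_of_sup_le hab.le (le_of_eq h1'.symm)
        (le_of_eq h2'.symm))
  calc (p.length : ℕ∞) ≤ _ := key
    _ ≤ myLen R N + myLen R (M ⧸ N) := by
        gcongr
        · exact myLen_height_le _
        · exact myLen_height_le _

end myLen

section quotients
variable {R : Type*} [CommRing R] {M : Type*} [AddCommGroup M] [Module R M]

lemma myLen_quot_anti {A B : Ideal R} (hAB : A ≤ B) :
    myLen R (R ⧸ B) ≤ myLen R (R ⧸ A) := by
  set φ : (R ⧸ A) →ₗ[R] (R ⧸ B) :=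
    Submodule.mapQ A B LinearMap.id (fun x hx => hAB hx)
  have hsurj : Function.Surjective φ := by
    intro y
    obtain ⟨x, rfl⟩ := Submodule.mkQ_surjective B y
    exact ⟨Submodule.mkQ A x, by simp only [φ, Submodule.mkQ_apply, Submodule.mapQ_apply, LinearMap.id_apply]⟩
  have hsm : StrictMono (fun p : Submodule R (R ⧸ B) => Submodule.comap φ p) := by
    intro a b hab
    refine lt_of_le_of_ne (Submodule.comap_mono hab.le) ?_
    intro h
    have := congrArg (Submodule.map φ) h
    rw [Submodule.map_comap_eq_of_surjective hsurj, Submodule.map_comap_eq_of_surjective hsurj]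
      at this
    exact hab.ne this
  have := Order.krullDim_le_of_strictMono _ hsm
  rw [mLength_eq_myLen, mLength_eq_myLen] at this
  exact_mod_cast this

lemma myLen_cyclic {A : Ideal R} (x : M) (hx : Submodule.span R {x} = ⊤)
    (hann : ∀ a ∈ A, a • x = 0) : myLen R M ≤ myLen R (R ⧸ A) := by
  set f := LinearMap.toSpanSingleton R M x
  have hsurj : Function.Surjective f := by
    rw [← LinearMap.range_eq_top, ← LinearMap.span_singleton_eq_range, hx]
  have hker : A ≤ LinearMap.ker f := fun a ha => by
    simp [f, LinearMap.mem_ker, LinearMap.toSpanSingleton_apply, hann a ha]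
  have e := LinearMap.quotKerEquivOfSurjective f hsurj
  rw [myLen_eq_of_equiv e.symm]
  exact myLen_quot_anti hker

end quotients

section fgbound
variable {R : Type*} [CommRing R] {M : Type*} [AddCommGroup M] [Module R M]

lemma myLen_eq_zero_of_subsingleton {Q : Type*} [AddCommGroup Q] [Module R Q]
    [Subsingleton Q] : myLen R Q = 0 := by
  refine le_antisymm (iSup_le fun p => ?_) zero_le
  suffices h : p.length = 0 by simp [h]
  by_contra h
  have h1 : (⟨0, by omega⟩ : Fin (p.length + 1)) < ⟨1, by omega⟩ := by
    simp [Fin.lt_def]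
  exact absurd (Subsingleton.elim _ _) (p.strictMono h1).ne

lemma myLen_span_finset_le (A : Ideal R) (s : Finset M) (L : Submodule R M)
    (hspan : Submodule.span R (s : Set M) = L)
    (hann : ∀ a ∈ A, ∀ x ∈ L, a • x = (0 : M)) :
    myLen R L ≤ s.card * myLen R (R ⧸ A) := by
  classical
  induction s using Finset.induction_on generalizing L with
  | empty =>
    have : L = ⊥ := by simpa using hspan.symm
    subst this
    have : Subsingleton (⊥ : Submodule R M) := by infer_instance
    simp [myLen_eq_zero_of_subsingleton]
  | @insert x s hx ih =>
    set L' : Submodule R M := Submodule.span R (s : Set M) with hL'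
    have hL'le : L' ≤ L := by
      rw [← hspan]; exact Submodule.span_mono (by simp)
    have hxL : x ∈ L := by
      rw [← hspan]; exact Submodule.subset_span (by simp)
    set N : Submodule R L := Submodule.comap L.subtype L' with hN
    have h1 : myLen R L ≤ myLen R N + myLen R (L ⧸ N) := myLen_le_add N
    have h2 : myLen R N = myLen R L' := myLen_eq_of_equiv (Submodule.comapSubtypeEquivOfLe hL'le)
    have h3 : myLen R L' ≤ s.card * myLen R (R ⧸ A) :=
      ih L' rfl (fun a ha y hy => hann a ha y (hL'le hy))
    -- the quotient L/N is cyclic generated by the image of x, annihilated by A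
    have htop : N ⊔ Submodule.span R {(⟨x, hxL⟩ : L)} = ⊤ := by
      apply Submodule.map_injective_of_injective (Submodule.injective_subtype L)
      rw [Submodule.map_sup, Submodule.map_comap_subtype, Submodule.map_span]
      have himg : (L.subtype '' {(⟨x, hxL⟩ : L)}) = {x} := by simp
      rw [himg]
      have : Submodule.map L.subtype ⊤ = L := by
        rw [Submodule.map_top, Submodule.range_subtype]
      rw [this, inf_eq_right.mpr hL'le, ← hspan, Finset.coe_insert, Submodule.span_insert,
        sup_comm]
    have h4 : myLen R (L ⧸ N) ≤ myLen R (R ⧸ A) := by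
      apply myLen_cyclic (A := A) (N.mkQ ⟨x, hxL⟩)
      · have hbot : Submodule.map N.mkQ N = ⊥ := by
          rw [eq_bot_iff]
          rintro y ⟨z, hz, rfl⟩
          simpa using (Submodule.Quotient.mk_eq_zero N).mpr hz
        rw [show ({N.mkQ ⟨x, hxL⟩} : Set (L ⧸ N)) = N.mkQ '' {(⟨x, hxL⟩ : L)} by simp,
          ← Submodule.map_span]
        have : Submodule.map N.mkQ (Submodule.span R {(⟨x, hxL⟩ : L)}) =
            Submodule.map N.mkQ (N ⊔ Submodule.span R {(⟨x, hxL⟩ : L)}) := by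
          rw [Submodule.map_sup, hbot, bot_sup_eq]
        rw [this, htop, Submodule.map_top, Submodule.range_mkQ]
      · intro a ha
        have hz : a • (⟨x, hxL⟩ : L) = 0 := by
          ext
          simpa using hann a ha x hxL
        calc a • N.mkQ ⟨x, hxL⟩ = N.mkQ (a • (⟨x, hxL⟩ : L)) := (map_smul _ _ _).symm
          _ = 0 := by rw [hz, map_zero]
    calc myLen R L ≤ myLen R N + myLen R (L ⧸ N) := h1
      _ ≤ s.card * myLen R (R ⧸ A) + myLen R (R ⧸ A) := by rw [h2]; gcongr
      _ = (insert x s).card * myLen R (R ⧸ A) := by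
          rw [Finset.card_insert_of_notMem hx]
          push_cast
          ring
end fgbound

section chain
variable {R : Type*} [CommRing R] {M : Type*} [AddCommGroup M] [Module R M]

lemma myLen_quot_le_layer (N P : Submodule R M) (h : N ≤ P) :
    myLen R (M ⧸ N) ≤ myLen R (Submodule.map N.mkQ P) + myLen R (M ⧸ P) := by
  have := myLen_le_add (R := R) (M := M ⧸ N) (Submodule.map N.mkQ P)
  rwa [myLen_eq_of_equiv (Submodule.quotientQuotientEquivQuotient N P h)] at this

lemma myLen_chain (G : ℕ → Submodule R M) (hmono : ∀ k, G k ≤ G (k+1)) (t : ℕ) :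
    myLen R (M ⧸ G 0) ≤ myLen R (M ⧸ G t)
      + ∑ k ∈ Finset.range t, myLen R (Submodule.map (G k).mkQ (G (k+1))) := by
  induction t with
  | zero => simp
  | succ t ih =>
    calc myLen R (M ⧸ G 0)
        ≤ myLen R (M ⧸ G t) + ∑ k ∈ Finset.range t,
            myLen R (Submodule.map (G k).mkQ (G (k+1))) := ih
      _ ≤ (myLen R (Submodule.map (G t).mkQ (G (t+1))) + myLen R (M ⧸ G (t+1)))
            + ∑ k ∈ Finset.range t, myLen R (Submodule.map (G k).mkQ (G (k+1))) := by
          gcongr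
          exact myLen_quot_le_layer _ _ (hmono t)
      _ = myLen R (M ⧸ G (t+1)) + ∑ k ∈ Finset.range (t+1),
            myLen R (Submodule.map (G k).mkQ (G (k+1))) := by
          rw [Finset.sum_range_succ]
          ring

end chain

section binomial
variable {R : Type*} [CommRing R]

lemma finsetSup_mul (s : Finset ℕ) (f : ℕ → Ideal R) (I : Ideal R) :
    s.sup f * I = s.sup (fun j => f j * I) := by
  classical
  induction s using Finset.induction_on with
  | empty => simpa using Ideal.bot_mul I
  | @insert a s ha ih =>
    rw [Finset.sup_insert, Finset.sup_insert, Ideal.sup_mul, ih]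

lemma sup_pow_eq (J H : Ideal R) (n : ℕ) :
    (J ⊔ H) ^ n = (Finset.range (n+1)).sup (fun j => J ^ (n - j) * H ^ j) := by
  induction n with
  | zero => simp
  | succ n ih =>
    rw [pow_succ, ih, finsetSup_mul]
    apply le_antisymm
    · apply Finset.sup_le
      intro j hj
      rw [Finset.mem_range] at hj
      rw [Ideal.mul_sup]
      apply sup_le
      · have h1 : J ^ (n - j) * H ^ j * J = J ^ (n + 1 - j) * H ^ j := by
          rw [mul_comm (J ^ (n-j) * H ^ j) J, ← mul_assoc, ← pow_succ']
          congr 2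
          omega
        rw [h1]
        exact Finset.le_sup (f := fun j => J ^ (n+1-j) * H ^ j)
          (Finset.mem_range.mpr (by omega))
      · have h2 : J ^ (n - j) * H ^ j * H = J ^ (n + 1 - (j+1)) * H ^ (j+1) := by
          rw [mul_assoc, ← pow_succ]
          congr 2
          omega
        rw [h2]
        exact Finset.le_sup (f := fun j => J ^ (n+1-j) * H ^ j)
          (Finset.mem_range.mpr (by omega))
    · apply Finset.sup_le
      intro j hj
      rw [Finset.mem_range] at hj
      rcases Nat.lt_or_ge j (n+1) with h | h
      · calc J ^ (n+1-j) * H ^ j = (J ^ (n - j) * H ^ j) * J := by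
              rw [mul_comm (J ^ (n-j) * H ^ j) J, ← mul_assoc, ← pow_succ']
              congr 2
              omega
          _ ≤ (J ^ (n - j) * H ^ j) * (J ⊔ H) := by gcongr; exact le_sup_left
          _ ≤ _ := Finset.le_sup (f := fun j => J ^ (n-j) * H ^ j * (J ⊔ H))
              (Finset.mem_range.mpr h)
      · have hj' : j = n + 1 := by omega
        subst hj'
        calc J ^ (n+1-(n+1)) * H ^ (n+1) = (J ^ (n - n) * H ^ n) * H := by
              rw [mul_assoc, ← pow_succ]
              congr 2
              omega
          _ ≤ (J ^ (n - n) * H ^ n) * (J ⊔ H) := by gcongr; exact le_sup_right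
          _ ≤ _ := Finset.le_sup (f := fun j => J ^ (n-j) * H ^ j * (J ⊔ H))
              (Finset.mem_range.mpr (by omega))

end binomial

section layer
variable {R : Type*} [CommRing R]

/-- minimal number of generators (copy of the pinned `nu`) -/
noncomputable def nu' {R M : Type*} [CommRing R] [AddCommGroup M] [Module R M]
    (N : Submodule R M) : ℕ :=
  sInf {n | ∃ s : Finset M, s.card = n ∧ Submodule.span R (s : Set M) = N}

lemma exists_span_finset [IsNoetherianRing R] (P : Ideal R) :
    ∃ s : Finset R, s.card = nu' P ∧ Ideal.span (s : Set R) = P := by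
  have hne : (nu' P) ∈ {n | ∃ s : Finset R, s.card = n ∧ Submodule.span R (s : Set R) = P} := by
    apply Nat.sInf_mem
    obtain ⟨s, hs⟩ := (IsNoetherian.noetherian P : P.FG)
    exact ⟨s.card, s, rfl, hs⟩
  exact hne

/-- the filtration ideals -/
noncomputable def filtG (J H : Ideal R) (n k : ℕ) : Ideal R :=
  (Finset.range (k+1)).sup (fun j => J ^ (n - j) * H ^ j)

lemma filtG_zero (J H : Ideal R) (n : ℕ) : filtG J H n 0 = J ^ n := by
  simp [filtG]

lemma filtG_succ (J H : Ideal R) (n k : ℕ) :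
    filtG J H n (k+1) = (J ^ (n - (k+1)) * H ^ (k+1)) ⊔ filtG J H n k := by
  rw [filtG, filtG, Finset.range_add_one, Finset.sup_insert]

lemma filtG_mono (J H : Ideal R) (n k : ℕ) : filtG J H n k ≤ filtG J H n (k+1) := by
  rw [filtG_succ]; exact le_sup_right

lemma filtG_last (J H : Ideal R) (n : ℕ) : filtG J H n n = (J ⊔ H) ^ n :=
  (sup_pow_eq J H n).symm

lemma term_le_filtG (J H : Ideal R) (n k : ℕ) : J ^ (n - k) * H ^ k ≤ filtG J H n k :=
  Finset.le_sup (f := fun j => J ^ (n - j) * H ^ j) (Finset.mem_range.mpr (by omega))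

lemma layer_bound [IsNoetherianRing R] (J A : Ideal R) (h : R)
    (hA : A * Ideal.span {h} ≤ J) (n k : ℕ) (hk : k < n) :
    myLen R (Submodule.map (filtG J (Ideal.span {h}) n k).mkQ (filtG J (Ideal.span {h}) n (k+1)))
      ≤ (nu' (J ^ (n - (k+1))) : ℕ∞) * myLen R (R ⧸ A) := by
  classical
  set H : Ideal R := Ideal.span {h} with hH
  set Gk := filtG J H n k with hGk
  set Gk1 := filtG J H n (k+1) with hGk1
  obtain ⟨sJ, hcard, hspan⟩ := exists_span_finset (J ^ (n - (k+1)))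
  set t : Finset (R ⧸ Gk) := sJ.image (fun r => Gk.mkQ (r * h ^ (k+1))) with ht
  -- spanning
  have hspan2 : Submodule.span R (t : Set (R ⧸ Gk)) = Submodule.map Gk.mkQ Gk1 := by
    have hmul : J ^ (n - (k+1)) * H ^ (k+1) =
        Ideal.span ((fun r => r * h ^ (k+1)) '' (sJ : Set R)) := by
      rw [← hspan, hH, Ideal.span_singleton_pow, Ideal.span_mul_span', Set.mul_singleton]
    have hbot : Submodule.map Gk.mkQ Gk ≤ ⊥ := by
      rintro y ⟨z, hz, rfl⟩
      simpa using (Submodule.Quotient.mk_eq_zero Gk).mpr hz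
    rw [hGk1, filtG_succ, Submodule.map_sup, le_bot_iff.mp hbot, sup_bot_eq, hmul]
    simp only [Ideal.span]
    rw [Submodule.map_span]
    congr 1
    rw [ht, Finset.coe_image, Set.image_image]
  -- annihilation
  have hannG : A * Gk1 ≤ Gk := by
    rw [hGk1, filtG_succ, Ideal.mul_sup]
    apply sup_le
    · have e1 : A * (J ^ (n - (k+1)) * H ^ (k+1)) = (A * H) * (J ^ (n - (k+1)) * H ^ k) := by
        rw [pow_succ]; ring
      rw [e1]
      calc (A * H) * (J ^ (n - (k+1)) * H ^ k) ≤ J * (J ^ (n - (k+1)) * H ^ k) := by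
            gcongr
        _ = J ^ (n - k) * H ^ k := by
            rw [← mul_assoc, ← pow_succ']
            congr 2
            omega
        _ ≤ Gk := term_le_filtG J H n k
    · rw [mul_comm]; exact Ideal.mul_le_left
  have hann : ∀ a ∈ A, ∀ x ∈ Submodule.map Gk.mkQ Gk1, a • x = (0 : R ⧸ Gk) := by
    rintro a ha x ⟨z, hz, rfl⟩
    have : a * z ∈ Gk := hannG (Ideal.mul_mem_mul ha hz)
    calc a • Gk.mkQ z = Gk.mkQ (a • z) := (map_smul _ _ _).symm
      _ = 0 := by
          rw [Submodule.mkQ_apply, Submodule.Quotient.mk_eq_zero]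
          simpa [smul_eq_mul] using this
  calc myLen R (Submodule.map Gk.mkQ Gk1)
      ≤ (t.card : ℕ∞) * myLen R (R ⧸ A) := myLen_span_finset_le A t _ hspan2 hann
    _ ≤ (nu' (J ^ (n - (k+1))) : ℕ∞) * myLen R (R ⧸ A) := by
        gcongr
        exact_mod_cast hcard ▸ Finset.card_image_le

lemma main_algebra_ineq [IsNoetherianRing R] (J A : Ideal R) (h : R)
    (hA : A * Ideal.span {h} ≤ J) (n : ℕ) :
    myLen R (R ⧸ J ^ n) ≤ myLen R (R ⧸ (J ⊔ Ideal.span {h}) ^ n)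
      + (∑ j ∈ Finset.range n, (nu' (J ^ j) : ℕ∞)) * myLen R (R ⧸ A) := by
  set H : Ideal R := Ideal.span {h} with hH
  have hchain := myLen_chain (M := R) (fun k => filtG J H n k) (filtG_mono J H n) n
  rw [filtG_zero, filtG_last] at hchain
  calc myLen R (R ⧸ J ^ n) ≤ myLen R (R ⧸ (J ⊔ H) ^ n)
        + ∑ k ∈ Finset.range n,
            myLen R (Submodule.map (filtG J H n k).mkQ (filtG J H n (k+1))) := hchain
    _ ≤ myLen R (R ⧸ (J ⊔ H) ^ n)
        + ∑ k ∈ Finset.range n, (nu' (J ^ (n - (k+1))) : ℕ∞) * myLen R (R ⧸ A) := by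
        gcongr with k hk
        exact layer_bound J A h hA n k (Finset.mem_range.mp hk)
    _ = myLen R (R ⧸ (J ⊔ H) ^ n)
        + (∑ j ∈ Finset.range n, (nu' (J ^ j) : ℕ∞)) * myLen R (R ⧸ A) := by
        congr 1
        rw [← Finset.sum_mul]
        congr 1
        rw [show (∑ k ∈ Finset.range n, (nu' (J ^ (n - (k+1))) : ℕ∞))
            = ∑ k ∈ Finset.range n, (nu' (J ^ (n - 1 - k)) : ℕ∞) from
          Finset.sum_congr rfl (fun k hk => by
            have e : n - (k+1) = n - 1 - k := by omega
            rw [e])]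
        exact Finset.sum_range_reflect (fun j => (nu' (J ^ j) : ℕ∞)) n

end layer

section numeric
open Polynomial

lemma hockey (e : ℕ) : ∀ M : ℕ, ∑ m ∈ Finset.range M, (m + e).choose e = (M + e).choose (e+1)
  | 0 => by simp [Nat.choose_eq_zero_of_lt (Nat.lt_succ_self e)]
  | (M+1) => by
      rw [Finset.sum_range_succ, hockey e M]
      have : (M + 1 + e).choose (e+1) = (M + e).choose e + (M + e).choose (e+1) := by
        rw [show M + 1 + e = (M + e) + 1 by omega, Nat.choose_succ_succ']
      omega

lemma coeff_eval_bound (p : Polynomial ℚ) (e : ℕ) (he : 1 ≤ e)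
    (hdeg : p.degree < ((e : ℕ) : WithBot ℕ)) (j n : ℕ) (hjn : j ≤ n) (hn : 1 ≤ n) :
    |p.eval (j : ℚ)| ≤ (∑ i ∈ Finset.range e, |p.coeff i|) * (n : ℚ) ^ (e - 1) := by
  rcases eq_or_ne p 0 with rfl | hp
  · simpa using by positivity
  · have hnd : p.natDegree < e := by
      rwa [Polynomial.natDegree_lt_iff_degree_lt hp]
    rw [Polynomial.eval_eq_sum_range' hnd]
    calc |∑ i ∈ Finset.range e, p.coeff i * (j:ℚ) ^ i|
        ≤ ∑ i ∈ Finset.range e, |p.coeff i * (j:ℚ) ^ i| := Finset.abs_sum_le_sum_abs _ _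
      _ ≤ ∑ i ∈ Finset.range e, |p.coeff i| * (n : ℚ) ^ (e-1) := by
          apply Finset.sum_le_sum
          intro i hi
          rw [Finset.mem_range] at hi
          rw [abs_mul]
          have hb : |(j:ℚ) ^ i| ≤ (n:ℚ) ^ (e-1) := by
            rw [abs_pow, abs_of_nonneg (by positivity : (0:ℚ) ≤ (j:ℚ))]
            calc (j:ℚ) ^ i ≤ (n:ℚ) ^ i :=
                  pow_le_pow_left₀ (by positivity) (by exact_mod_cast hjn) i
              _ ≤ (n:ℚ) ^ (e-1) := by
                  apply pow_le_pow_right₀ (by exact_mod_cast hn)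
                  omega
          exact mul_le_mul (le_refl _) hb (abs_nonneg _) (abs_nonneg _)
      _ = (∑ i ∈ Finset.range e, |p.coeff i|) * (n : ℚ) ^ (e-1) := by
          rw [Finset.sum_mul]

lemma ptBound (p : Polynomial ℚ) (e : ℕ) (he : 1 ≤ e)
    (hdeg : p.degree < ((e : ℕ) : WithBot ℕ)) :
    ∃ c : ℚ, 0 ≤ c ∧ ∀ n : ℕ, 1 ≤ n → |p.eval (n : ℚ)| ≤ c * (n : ℚ) ^ (e - 1) := by
  refine ⟨∑ i ∈ Finset.range e, |p.coeff i|, Finset.sum_nonneg fun _ _ => abs_nonneg _,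
    fun n hn => coeff_eval_bound p e he hdeg n n le_rfl hn⟩

lemma sumBound (p : Polynomial ℚ) (e : ℕ) (hdeg : p.degree < ((e : ℕ) : WithBot ℕ)) :
    ∃ c : ℚ, 0 ≤ c ∧ ∀ n : ℕ,
      (∑ j ∈ Finset.range n, |p.eval (j : ℚ)|) ≤ c * (n : ℚ) ^ e := by
  rcases Nat.eq_zero_or_pos e with rfl | he
  · have hb : p.degree = ⊥ := Nat.WithBot.lt_zero_iff.mp (by exact_mod_cast hdeg)
    have hp : p = 0 := Polynomial.degree_eq_bot.mp hb
    exact ⟨0, le_rfl, fun n => by simp [hp]⟩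
  · refine ⟨∑ i ∈ Finset.range e, |p.coeff i|, Finset.sum_nonneg fun _ _ => abs_nonneg _,
      fun n => ?_⟩
    rcases Nat.eq_zero_or_pos n with rfl | hn
    · simp [zero_pow (by omega : e ≠ 0)]
    calc (∑ j ∈ Finset.range n, |p.eval (j : ℚ)|)
        ≤ ∑ _j ∈ Finset.range n,
            (∑ i ∈ Finset.range e, |p.coeff i|) * (n : ℚ) ^ (e-1) := by
          apply Finset.sum_le_sum
          intro j hj
          exact coeff_eval_bound p e he hdeg j n (le_of_lt (Finset.mem_range.mp hj)) hn
      _ = (n : ℚ) * ((∑ i ∈ Finset.range e, |p.coeff i|) * (n : ℚ) ^ (e-1)) := by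
          rw [Finset.sum_const, Finset.card_range, nsmul_eq_mul]
      _ = (∑ i ∈ Finset.range e, |p.coeff i|) * (n : ℚ) ^ e := by
          have hpow : (n:ℚ) ^ e = (n:ℚ) ^ (e-1) * n := by
            rw [← pow_succ]
            congr 1
            omega
          rw [hpow]
          ring

end numeric

end AuxLemmas

/-- Let `(R, m)` be a Noetherian local ring of dimension `d ≥ 1` and `J ⊆ I = (J, h)`
`m`-primary ideals. Then `e₀(J) − e₀(I) ≤ λ(R/(J:I))·f₀(J)`. -/
theorem e0_sub_e0_le
    (R : Type*) [CommRing R] [IsNoetherianRing R] [IsLocalRing R]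
    (d : ℕ) (hd : 1 ≤ d) (hdim : ringKrullDim R = d)
    (J I : Ideal R) (h : R) (hJI : I = J ⊔ Ideal.span {h})
    (hJ : J.radical = maximalIdeal R) (hI : I.radical = maximalIdeal R)
    (e0J e0I : ℤ) (hJ0 : HasMultiplicity J d e0J) (hI0 : HasMultiplicity I d e0I)
    (f0 : ℕ) (hf0 : HasFiberMult J d f0)
    (lam : ℕ) (hlam : mLength R (R ⧸ (Submodule.colon J I)) = (lam : WithBot ℕ∞)) :
    e0J - e0I ≤ (lam : ℤ) * f0 := by
  classical
  by_contra hcon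
  push_neg at hcon
  obtain ⟨pJ, lamJf, hdegJ, hlenJ, hevJ⟩ := hJ0
  obtain ⟨pI, lamIf, hdegI, hlenI, hevI⟩ := hI0
  obtain ⟨pF, hdegF, hevF⟩ := hf0
  have hnu : ∀ P : Ideal R, nu' P = nu P := fun _ => rfl
  -- colon annihilation property
  have hhI : h ∈ I := by
    rw [hJI]
    exact (le_sup_right : Ideal.span {h} ≤ J ⊔ Ideal.span {h})
      (Submodule.mem_span_singleton_self h)
  have hA : Submodule.colon J I * Ideal.span {h} ≤ J := by
    rw [Ideal.mul_le]
    intro a ha s hs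
    obtain ⟨c, rfl⟩ := Ideal.mem_span_singleton'.mp hs
    have h1 : a * h ∈ J := by
      have := Submodule.mem_colon.mp ha h hhI
      simpa [smul_eq_mul] using this
    have h2 : a * (c * h) = c * (a * h) := by ring
    rw [h2]
    exact J.mul_mem_left c h1
  -- translate lengths
  have hmy : ∀ (Q : Ideal R) (m : ℕ), mLength R (R ⧸ Q) = (m : WithBot ℕ∞) →
      myLen R (R ⧸ Q) = (m : ℕ∞) := by
    intro Q m hm
    have h2 := mLength_eq_myLen (R := R) (M := R ⧸ Q)
    rw [mLength] at hm
    rw [hm] at h2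
    exact_mod_cast h2.symm
  -- the key per-n inequality over ℚ
  have key : ∀ n : ℕ, (lamJf n : ℚ) ≤ (lamIf n : ℚ)
      + (∑ j ∈ Finset.range n, (nu (J ^ j) : ℚ)) * (lam : ℚ) := by
    intro n
    have halg := main_algebra_ineq J (Submodule.colon J I) h hA n
    rw [← hJI] at halg
    rw [hmy (J ^ n) (lamJf n) (hlenJ n), hmy (I ^ n) (lamIf n) (hlenI n),
      hmy (Submodule.colon J I) lam hlam] at halg
    have halg' : lamJf n ≤ lamIf n + (∑ j ∈ Finset.range n, nu' (J ^ j)) * lam := by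
      exact_mod_cast halg
    simp only [hnu] at halg'
    exact_mod_cast halg'
  -- polynomial bounds
  obtain ⟨cJ, hcJ0, hcJ⟩ := ptBound pJ d hd hdegJ
  obtain ⟨cI, hcI0, hcI⟩ := ptBound pI d hd hdegI
  obtain ⟨cF, hcF0, hcF⟩ := sumBound pF (d - 1) hdegF
  obtain ⟨NJ, hNJ⟩ := Filter.eventually_atTop.mp hevJ
  obtain ⟨NI, hNI⟩ := Filter.eventually_atTop.mp hevI
  obtain ⟨NF, hNF⟩ := Filter.eventually_atTop.mp hevF
  set N : ℕ := max 1 (max NJ (max NI NF)) with hN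
  set K : ℚ := ∑ j ∈ Finset.range N, (nu (J ^ j) : ℚ) with hK
  have hK0 : 0 ≤ K := Finset.sum_nonneg fun _ _ => by positivity
  -- bound on the sum of nu's
  have Sbound : ∀ n : ℕ, N ≤ n →
      (∑ j ∈ Finset.range n, (nu (J ^ j) : ℚ))
        ≤ K + (f0 : ℚ) * ((n + d - 2).choose d : ℚ) + cF * (n : ℚ) ^ (d - 1) := by
    intro n hn
    have hsplit : (∑ j ∈ Finset.range n, (nu (J ^ j) : ℚ))
        = K + ∑ j ∈ Finset.Ico N n, (nu (J ^ j) : ℚ) := by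
      rw [hK, Finset.range_eq_Ico, Finset.range_eq_Ico]
      exact (Finset.sum_Ico_consecutive (f := fun j => (nu (J ^ j) : ℚ)) (Nat.zero_le N) hn).symm
    have hmid : ∑ j ∈ Finset.Ico N n, (nu (J ^ j) : ℚ)
        ≤ (f0 : ℚ) * (∑ j ∈ Finset.Ico N n, ((j + d - 2).choose (d-1) : ℚ))
          + ∑ j ∈ Finset.Ico N n, |pF.eval (j : ℚ)| := by
      rw [Finset.mul_sum, ← Finset.sum_add_distrib]
      apply Finset.sum_le_sum
      intro j hj
      have hjN : NF ≤ j := le_trans (by omega : NF ≤ N) (Finset.mem_Ico.mp hj).1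
      have := hNF j hjN
      simp only at this
      rw [this]
      gcongr
      exact le_abs_self _
    have hC : (∑ j ∈ Finset.Ico N n, ((j + d - 2).choose (d-1) : ℚ))
        ≤ ((n + d - 2).choose d : ℚ) := by
      have hsub : ∑ j ∈ Finset.Ico N n, (j + d - 2).choose (d-1)
          ≤ ∑ j ∈ Finset.Ico 1 n, (j + d - 2).choose (d-1) :=
        Finset.sum_le_sum_of_subset (Finset.Ico_subset_Ico (by omega) le_rfl)
      have h2 : ∑ j ∈ Finset.Ico 1 n, (j + d - 2).choose (d-1) = (n + d - 2).choose d := by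
        rw [Finset.sum_Ico_eq_sum_range]
        have e1 : ∀ m, (1 + m + d - 2).choose (d-1) = (m + (d-1)).choose (d-1) := by
          intro m
          congr 1
          omega
        rw [Finset.sum_congr rfl (fun m _ => e1 m), hockey (d-1) (n-1)]
        have : n - 1 + (d - 1) = n + d - 2 := by omega
        rw [this, show d - 1 + 1 = d by omega]
      calc (∑ j ∈ Finset.Ico N n, ((j + d - 2).choose (d-1) : ℚ))
          = ((∑ j ∈ Finset.Ico N n, (j + d - 2).choose (d-1) : ℕ) : ℚ) := by push_cast; ring
        _ ≤ _ := by exact_mod_cast le_trans hsub (le_of_eq h2)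
    have hpFsum : ∑ j ∈ Finset.Ico N n, |pF.eval (j : ℚ)| ≤ cF * (n : ℚ) ^ (d - 1) := by
      calc ∑ j ∈ Finset.Ico N n, |pF.eval (j : ℚ)|
          ≤ ∑ j ∈ Finset.range n, |pF.eval (j : ℚ)| := by
            apply Finset.sum_le_sum_of_subset_of_nonneg
            · rw [Finset.range_eq_Ico]
              exact Finset.Ico_subset_Ico (Nat.zero_le N) le_rfl
            · intro i _ _
              exact abs_nonneg _
        _ ≤ cF * (n : ℚ) ^ (d - 1) := hcF n
    have hf0' : (0:ℚ) ≤ (f0:ℚ) := by positivity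
    calc (∑ j ∈ Finset.range n, (nu (J ^ j) : ℚ))
        = K + ∑ j ∈ Finset.Ico N n, (nu (J ^ j) : ℚ) := hsplit
      _ ≤ K + ((f0 : ℚ) * (∑ j ∈ Finset.Ico N n, ((j + d - 2).choose (d-1) : ℚ))
          + ∑ j ∈ Finset.Ico N n, |pF.eval (j : ℚ)|) := by gcongr
      _ ≤ K + ((f0 : ℚ) * ((n + d - 2).choose d : ℚ) + cF * (n : ℚ) ^ (d - 1)) := by gcongr
      _ = K + (f0 : ℚ) * ((n + d - 2).choose d : ℚ) + cF * (n : ℚ) ^ (d - 1) := by ring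
  -- the contradiction
  have hδ : (lam : ℚ) * (f0 : ℚ) + 1 ≤ (e0J : ℚ) - (e0I : ℚ) := by
    have : (lam : ℤ) * (f0 : ℤ) + 1 ≤ e0J - e0I := by omega
    exact_mod_cast this
  set B : ℚ := cI + cJ + (lam : ℚ) * K + (lam : ℚ) * cF with hBdef
  have hB0 : 0 ≤ B := by positivity
  obtain ⟨n0, hn0⟩ := exists_nat_gt ((d.factorial : ℚ) * B)
  set n : ℕ := max N (max n0 1) with hndef
  have hnN : N ≤ n := le_max_left _ _
  have hn1 : 1 ≤ n := le_trans (le_max_right n0 1) (le_max_right _ _)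
  have hnn0 : (d.factorial : ℚ) * B < (n : ℚ) := by
    calc (d.factorial : ℚ) * B < (n0 : ℚ) := hn0
      _ ≤ (n : ℚ) := by
          exact_mod_cast le_trans (le_max_left n0 1) (le_max_right N _)
  set X : ℚ := (n : ℚ) ^ (d - 1) with hX
  have hX1 : 1 ≤ X := one_le_pow₀ (by exact_mod_cast hn1)
  have hX0 : 0 < X := lt_of_lt_of_le one_pos hX1
  set C1 : ℚ := ((n + d - 1).choose d : ℚ) with hC1
  set C2 : ℚ := ((n + d - 2).choose d : ℚ) with hC2
  have hC1pos : 0 ≤ C1 := by positivity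
  have hC2C1 : C2 ≤ C1 := by
    rw [hC1, hC2]
    exact_mod_cast Nat.choose_le_choose d (by omega : n + d - 2 ≤ n + d - 1)
  -- assemble the eventual inequality
  have eJ : (lamJf n : ℚ) = (e0J : ℚ) * C1 + pJ.eval (n : ℚ) :=
    hNJ n (le_trans (le_trans (le_max_left NJ _) (le_max_right 1 _)) hnN)
  have eI : (lamIf n : ℚ) = (e0I : ℚ) * C1 + pI.eval (n : ℚ) :=
    hNI n (le_trans (le_trans (le_trans (le_max_left NI NF) (le_max_right NJ _))
      (le_max_right 1 _)) hnN)
  have hkey := key n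
  rw [eJ, eI] at hkey
  have hS := Sbound n hnN
  have habsJ : |pJ.eval (n:ℚ)| ≤ cJ * X := hcJ n hn1
  have habsI : |pI.eval (n:ℚ)| ≤ cI * X := hcI n hn1
  have hpJlb : -(cJ * X) ≤ pJ.eval (n:ℚ) := neg_le_of_abs_le habsJ
  have hpIub : pI.eval (n:ℚ) ≤ cI * X := le_of_abs_le habsI
  -- main chain
  have hlamf0 : (0:ℚ) ≤ (lam : ℚ) * (f0 : ℚ) := by positivity
  have step1 : ((e0J : ℚ) - e0I) * C1
      ≤ (lam : ℚ) * (f0 : ℚ) * C2 + (pI.eval (n:ℚ) - pJ.eval (n:ℚ)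
        + (lam:ℚ) * K + (lam:ℚ) * cF * X) := by
    have hSn : (∑ j ∈ Finset.range n, (nu (J ^ j) : ℚ)) * (lam : ℚ)
        ≤ (K + (f0 : ℚ) * C2 + cF * X) * (lam : ℚ) := by
      apply mul_le_mul_of_nonneg_right hS (by positivity)
    have hexp : (K + (f0 : ℚ) * C2 + cF * X) * (lam : ℚ)
        = (lam:ℚ) * K + (lam:ℚ) * (f0:ℚ) * C2 + (lam:ℚ) * cF * X := by ring
    rw [hexp] at hSn
    have hexp2 : ((e0J : ℚ) - e0I) * C1 = (e0J:ℚ) * C1 - (e0I:ℚ) * C1 := by ring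
    rw [hexp2]
    linarith [hkey, hSn]
  have step2 : (lam : ℚ) * (f0 : ℚ) * C2 + C1 ≤ ((e0J : ℚ) - e0I) * C1 := by
    have m1 : (lam : ℚ) * (f0 : ℚ) * C2 ≤ (lam : ℚ) * (f0 : ℚ) * C1 :=
      mul_le_mul_of_nonneg_left hC2C1 hlamf0
    have m2 : ((lam : ℚ) * (f0 : ℚ) + 1) * C1 ≤ ((e0J : ℚ) - e0I) * C1 :=
      mul_le_mul_of_nonneg_right hδ hC1pos
    have hexp3 : ((lam : ℚ) * (f0 : ℚ) + 1) * C1 = (lam:ℚ) * (f0:ℚ) * C1 + C1 := by ring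
    rw [hexp3] at m2
    linarith [m1, m2]
  have step3 : C1 ≤ B * X := by
    have hKX : (lam:ℚ) * K ≤ (lam:ℚ) * K * X :=
      le_mul_of_one_le_right (by positivity) hX1
    have hBX : B * X = cI * X + cJ * X + (lam:ℚ) * K * X + (lam:ℚ) * cF * X := by
      rw [hBdef]; ring
    linarith [step1, step2, hpJlb, hpIub, hKX]
  -- lower bound for C1
  have step4 : (n : ℚ) ^ d ≤ (d.factorial : ℚ) * C1 := by
    have hb := Nat.pow_le_choose d (n + d - 1) (α := ℚ)
    have harg : n + d - 1 + 1 - d = n := by omega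
    rw [harg] at hb
    rw [div_le_iff₀ (by positivity : (0:ℚ) < (d.factorial : ℚ))] at hb
    calc (n:ℚ) ^ d ≤ ((n + d - 1).choose d : ℚ) * (d.factorial : ℚ) := hb
      _ = (d.factorial : ℚ) * C1 := by rw [hC1]; ring
  have hpow : (n : ℚ) ^ d = (n : ℚ) * X := by
    rw [hX, ← pow_succ']
    congr 1
    omega
  have final : (n : ℚ) * X ≤ (d.factorial : ℚ) * B * X := by
    calc (n : ℚ) * X = (n : ℚ) ^ d := hpow.symm
      _ ≤ (d.factorial : ℚ) * C1 := step4
      _ ≤ (d.factorial : ℚ) * (B * X) := by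
          apply mul_le_mul_of_nonneg_left step3 (by positivity)
      _ = (d.factorial : ℚ) * B * X := by ring
  have : (n : ℚ) ≤ (d.factorial : ℚ) * B := le_of_mul_le_mul_right final hX0
  linarith [hnn0]
end

section
/- Let (R, m) be a Noetherian local ring of dimension d ≥ 1, J an m-primary ideal, and I = (J, h₁, …, h_m) integral over J with reduction number s = red_J(I). Then f₀(I) ≤ (1 + λ(R/(J : I)) · [binom(m+s, s) − 1]) · f₀(J). -/
open Filter IsLocalRing Polynomial

section Aux
open Finset

variable {R : Type*} [CommRing R]

lemma nu_exists [IsNoetherianRing R] (a : Ideal R) :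
    ∃ t : Finset R, t.card = nu a ∧ Ideal.span (t : Set R) = a := by
  have hfg : a.FG := (isNoetherianRing_iff_ideal_fg R).mp ‹_› a
  obtain ⟨t, ht⟩ := hfg
  have hne : {n | ∃ s : Finset R, s.card = n ∧ Submodule.span R (s : Set R) = a}.Nonempty :=
    ⟨t.card, t, rfl, ht⟩
  obtain ⟨t, ht1, ht2⟩ := Nat.sInf_mem hne
  exact ⟨t, ht1, ht2⟩

lemma nu_le {a : Ideal R} {t : Finset R} (h : Ideal.span (t : Set R) = a) : nu a ≤ t.card :=
  Nat.sInf_le ⟨t, rfl, h⟩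

lemma nu_bot : nu (⊥ : Ideal R) = 0 :=
  Nat.le_zero.mp (by simpa using nu_le (a := (⊥ : Ideal R)) (t := ∅) (by simp))

lemma nu_sup_le [IsNoetherianRing R] (a b : Ideal R) : nu (a ⊔ b) ≤ nu a + nu b := by
  classical
  obtain ⟨t, ht1, ht2⟩ := nu_exists a
  obtain ⟨u, hu1, hu2⟩ := nu_exists b
  have : Ideal.span ((t ∪ u : Finset R) : Set R) = a ⊔ b := by
    rw [Finset.coe_union, Ideal.span_union, ht2, hu2]
  calc nu (a ⊔ b) ≤ (t ∪ u).card := nu_le this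
    _ ≤ t.card + u.card := Finset.card_union_le _ _
    _ = nu a + nu b := by rw [ht1, hu1]

lemma nu_sum_le [IsNoetherianRing R] {ι : Type*} (t : Finset ι) (f : ι → Ideal R) :
    nu (∑ i ∈ t, f i) ≤ ∑ i ∈ t, nu (f i) := by
  induction t using Finset.cons_induction with
  | empty => simpa using Nat.le_of_eq nu_bot
  | cons a t ha ih =>
      rw [Finset.sum_cons, Finset.sum_cons]
      calc nu (f a + ∑ i ∈ t, f i) ≤ nu (f a) + nu (∑ i ∈ t, f i) := by
            rw [Submodule.add_eq_sup]; exact nu_sup_le _ _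
        _ ≤ nu (f a) + ∑ i ∈ t, nu (f i) := Nat.add_le_add_left ih _

lemma nu_singleton_mul_le [IsNoetherianRing R] (x : R) (b : Ideal R) :
    nu (Ideal.span {x} * b) ≤ nu b := by
  classical
  obtain ⟨t, ht1, ht2⟩ := nu_exists b
  have : Ideal.span ((t.image (fun y => x * y) : Finset R) : Set R) = Ideal.span {x} * b := by
    rw [← ht2, Ideal.span_mul_span']
    congr 1
    rw [Finset.coe_image, Set.singleton_mul]
  calc nu (Ideal.span {x} * b) ≤ (t.image (fun y => x * y)).card := nu_le this
    _ ≤ t.card := Finset.card_image_le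
    _ = nu b := ht1

lemma ideal_natCast_eq_one {n : ℕ} (hn : n ≠ 0) : (n : Ideal R) = 1 := by
  induction n with
  | zero => exact absurd rfl hn
  | succ k ih =>
      rcases Nat.eq_zero_or_pos k with hk | hk
      · subst hk; simp
      · rw [Nat.cast_succ, ih hk.ne', Submodule.add_eq_sup, Ideal.one_eq_top, sup_top_eq]

lemma ideal_span_range_eq_sum {m : ℕ} (h : Fin m → R) :
    Ideal.span (Set.range h) = ∑ i : Fin m, Ideal.span {h i} := by
  rw [Set.range_eq_iUnion]
  rw [show Ideal.span (⋃ i, {h i}) = ⨆ i, Ideal.span {h i} from Submodule.span_iUnion _]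
  rw [← Finset.sup_univ_eq_iSup]
  induction (univ : Finset (Fin m)) using Finset.cons_induction with
  | empty => simp
  | cons a t ha ih => rw [Finset.sum_cons, Finset.sup_cons, Submodule.add_eq_sup, ih]

lemma hpow_eq {m : ℕ} (h : Fin m → R) (k : ℕ) :
    (Ideal.span (Set.range h)) ^ k
      = ∑ α ∈ Finset.piAntidiag (univ : Finset (Fin m)) k,
          Ideal.span {∏ i : Fin m, h i ^ α i} := by
  rw [ideal_span_range_eq_sum, Finset.sum_pow_eq_sum_piAntidiag]
  refine Finset.sum_congr rfl fun α hα => ?_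
  rw [ideal_natCast_eq_one (Nat.multinomial_pos _ _).ne', one_mul]
  rw [← Ideal.prod_span_singleton]
  exact Finset.prod_congr rfl fun i _ => Ideal.span_singleton_pow _ _

lemma red_pow {J I : Ideal R} {s : ℕ} (hs : I ^ (s + 1) = J * I ^ s) (k : ℕ) :
    I ^ (s + k) = J ^ k * I ^ s := by
  induction k with
  | zero => simp
  | succ k ih =>
      have : I ^ (s + (k + 1)) = I ^ (s + k) * I := by ring
      rw [this, ih, mul_assoc, show J ^ k * (I ^ s * I) = J ^ k * I ^ (s+1) by ring_nf, hs]
      ring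

lemma In_decomp {J H I : Ideal R} (hJI : I = J ⊔ H) {s : ℕ}
    (hs : I ^ (s + 1) = J * I ^ s) {n : ℕ} (hn : s ≤ n) :
    I ^ n = ∑ k ∈ range (s + 1), J ^ (n - k) * H ^ k := by
  have hIJH : I = H + J := by rw [hJI, Submodule.add_eq_sup, sup_comm]
  have h1 : I ^ n = J ^ (n - s) * I ^ s := by
    have := red_pow hs (n - s)
    rwa [Nat.add_sub_cancel' hn] at this
  rw [h1, hIJH, add_pow, Finset.mul_sum]
  refine Finset.sum_congr rfl fun k hk => ?_
  rw [Finset.mem_range] at hk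
  have hk' : k ≤ s := Nat.lt_succ_iff.mp hk
  rw [ideal_natCast_eq_one (Nat.choose_pos hk').ne', mul_one]
  have hJJ : J ^ (n - s) * J ^ (s - k) = J ^ (n - k) := by
    rw [← pow_add]; congr 1; omega
  calc J ^ (n-s) * (H ^ k * J ^ (s-k)) = (J ^ (n-s) * J ^ (s-k)) * H ^ k := by ring
    _ = J ^ (n-k) * H ^ k := by rw [hJJ]

lemma nu_pow_bound [IsNoetherianRing R] {J I : Ideal R} {m : ℕ} {h : Fin m → R}
    (hJI : I = J ⊔ Ideal.span (Set.range h)) {s : ℕ} (hs : I ^ (s+1) = J * I ^ s)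
    {n : ℕ} (hn : s ≤ n) :
    nu (I ^ n) ≤ ∑ k ∈ range (s + 1),
      (Finset.piAntidiag (univ : Finset (Fin m)) k).card * nu (J ^ (n - k)) := by
  classical
  rw [In_decomp hJI hs hn]
  calc nu (∑ k ∈ range (s+1), J ^ (n-k) * (Ideal.span (Set.range h)) ^ k)
      ≤ ∑ k ∈ range (s+1), nu (J ^ (n-k) * (Ideal.span (Set.range h)) ^ k) := nu_sum_le _ _
    _ ≤ ∑ k ∈ range (s+1),
          (Finset.piAntidiag (univ : Finset (Fin m)) k).card * nu (J ^ (n - k)) := by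
        refine Finset.sum_le_sum fun k _ => ?_
        rw [hpow_eq, Finset.mul_sum]
        calc nu (∑ α ∈ Finset.piAntidiag (univ : Finset (Fin m)) k,
                J ^ (n-k) * Ideal.span {∏ i : Fin m, h i ^ α i})
            ≤ ∑ α ∈ Finset.piAntidiag (univ : Finset (Fin m)) k,
                nu (J ^ (n-k) * Ideal.span {∏ i : Fin m, h i ^ α i}) := nu_sum_le _ _
          _ ≤ ∑ _α ∈ Finset.piAntidiag (univ : Finset (Fin m)) k, nu (J ^ (n-k)) := by
              refine Finset.sum_le_sum fun α _ => ?_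
              rw [mul_comm]
              exact nu_singleton_mul_le _ _
          _ = (Finset.piAntidiag (univ : Finset (Fin m)) k).card * nu (J ^ (n - k)) := by
              rw [Finset.sum_const, smul_eq_mul]

lemma card_piAntidiag_le (m k : ℕ) :
    (Finset.piAntidiag (univ : Finset (Fin m)) k).card ≤ (m + k - 1).choose k := by
  classical
  have key : (Finset.piAntidiag (univ : Finset (Fin m)) k).card
      ≤ ((univ : Finset (Sym (Fin m) k)).image (fun x : Sym (Fin m) k => x.1)).card := by
    apply Finset.card_le_card_of_injOn
      (s := Finset.piAntidiag (univ : Finset (Fin m)) k)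
      (t := (univ : Finset (Sym (Fin m) k)).image (fun x : Sym (Fin m) k => x.1))
      (fun f => (Finsupp.equivFunOnFinite.symm f).toMultiset)
    · intro f hf
      rw [Finset.mem_coe, Finset.mem_piAntidiag] at hf
      have hcard : Multiset.card (Finsupp.equivFunOnFinite.symm f).toMultiset = k := by
        rw [Finsupp.card_toMultiset]
        rw [Finsupp.sum_fintype _ _ (fun _ => rfl)]
        simpa using hf.1
      exact Finset.mem_image.mpr
        ⟨⟨(Finsupp.equivFunOnFinite.symm f).toMultiset, hcard⟩, Finset.mem_univ _, rfl⟩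
    · intro f _ g _ hfg
      have hinj : Function.Injective (Finsupp.toMultiset (α := Fin m)) := by
        intro a b hab
        have := congrArg Multiset.toFinsupp hab
        rwa [Finsupp.toMultiset_toFinsupp, Finsupp.toMultiset_toFinsupp] at this
      exact Finsupp.equivFunOnFinite.symm.injective (hinj hfg)
  calc (Finset.piAntidiag (univ : Finset (Fin m)) k).card
      ≤ _ := key
    _ ≤ (univ : Finset (Sym (Fin m) k)).card := Finset.card_image_le
    _ = Fintype.card (Sym (Fin m) k) := Finset.card_univ
    _ = (m + k - 1).choose k := by
        rw [Sym.card_sym_eq_multichoose, Nat.multichoose_eq, Fintype.card_fin]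

lemma sum_choose_hockey (m : ℕ) : ∀ s : ℕ,
    ∑ k ∈ range (s + 1), (m + k - 1).choose k = (m + s).choose s := by
  intro s
  induction s with
  | zero => simp
  | succ s ih =>
      rw [Finset.sum_range_succ, ih]
      have h1 : m + (s + 1) - 1 = m + s := by omega
      have h2 : m + (s + 1) = (m + s) + 1 := by omega
      rw [h1, h2, Nat.choose_succ_succ]

lemma poly_no_dominate (e : ℕ) (w : Polynomial ℚ) (hw : w.degree < (e : WithBot ℕ))
    (h : ∀ᶠ n : ℕ in atTop, ((n : ℚ)) ^ e ≤ w.eval (n : ℚ)) : False := by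
  rcases Nat.eq_zero_or_pos e with he | he
  · subst he
    have hw0 : w = 0 := by
      rw [← Polynomial.degree_eq_bot]
      exact Nat.WithBot.lt_zero_iff.mp (by exact_mod_cast hw)
    obtain ⟨n, hn⟩ := h.exists
    rw [hw0] at hn
    simp at hn
    exact absurd hn (by norm_num)
  · set P : Polynomial ℚ := X ^ e - w with hP
    have hdegw : w.degree < (X ^ e : Polynomial ℚ).degree := by rwa [degree_X_pow]
    have hdeg : P.degree = e := by
      rw [hP, degree_sub_eq_left_of_degree_lt hdegw, degree_X_pow]
    have hnat : P.natDegree = e := natDegree_eq_of_degree_eq_some hdeg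
    have hlead : P.leadingCoeff = 1 := by
      rw [leadingCoeff, hnat, hP]
      simp [coeff_X_pow, coeff_eq_zero_of_degree_lt (lt_of_lt_of_le hw le_rfl)]
    have htop : Tendsto (fun x : ℚ => P.eval x) atTop atTop := by
      apply Polynomial.tendsto_atTop_of_leadingCoeff_nonneg
      · rw [hdeg]; exact_mod_cast he
      · rw [hlead]; norm_num
    have h2 : ∀ᶠ n : ℕ in atTop, (1 : ℚ) ≤ P.eval (n : ℚ) :=
      (htop.comp tendsto_natCast_atTop_atTop).eventually_ge_atTop 1
    obtain ⟨n, hn1, hn2⟩ := (h.and h2).exists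
    rw [hP] at hn2
    simp only [eval_sub, eval_pow, eval_X] at hn2
    linarith

lemma pow_le_fact_mul_choose (e n : ℕ) (hn : 1 ≤ n) :
    n ^ e ≤ e.factorial * ((n - 1 + e).choose e) := by
  have h1 : e.factorial * ((n - 1 + e).choose e) = (n - 1 + e).descFactorial e := by
    rw [Nat.descFactorial_eq_factorial_mul_choose]
  rw [h1, Nat.descFactorial_eq_prod_range]
  calc n ^ e = ∏ _i ∈ Finset.range e, n := by rw [Finset.prod_const, Finset.card_range]
    _ ≤ ∏ i ∈ Finset.range e, (n - 1 + e - i) := by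
        apply Finset.prod_le_prod'
        intro i hi
        rw [Finset.mem_range] at hi
        omega

lemma fiber_le (d : ℕ) (hd : 1 ≤ d) (A B : ℤ) (w : Polynomial ℚ)
    (hw : w.degree < ((d - 1 : ℕ) : WithBot ℕ))
    (h : ∀ᶠ n : ℕ in atTop,
      (A : ℚ) * ((n + d - 2).choose (d - 1)) ≤
        (B : ℚ) * ((n + d - 2).choose (d - 1)) + w.eval (n : ℚ)) :
    A ≤ B := by
  by_contra hAB
  push_neg at hAB
  have hA1 : (1 : ℤ) ≤ A - B := by omega
  set e := d - 1 with he
  have h2 : ∀ᶠ n : ℕ in atTop, (((n + d - 2).choose (d - 1) : ℚ)) ≤ w.eval (n : ℚ) := by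
    filter_upwards [h] with n hn
    have hch : (0 : ℚ) ≤ ((n + d - 2).choose (d - 1) : ℚ) := by positivity
    nlinarith [hn, hch, (by exact_mod_cast hA1 : (1:ℚ) ≤ (A:ℚ) - (B:ℚ))]
  have h3 : ∀ᶠ n : ℕ in atTop,
      ((n : ℚ)) ^ e ≤ (((e.factorial : ℚ)) • w).eval (n : ℚ) := by
    filter_upwards [h2, eventually_ge_atTop 1] with n hn hn1
    have hkey : (n : ℕ) ^ e ≤ e.factorial * ((n + d - 2).choose (d - 1)) := by
      have heq : n + d - 2 = n - 1 + e := by omega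
      rw [heq]
      exact pow_le_fact_mul_choose e n hn1
    calc ((n : ℚ)) ^ e ≤ (e.factorial : ℚ) * ((n + d - 2).choose (d - 1)) := by exact_mod_cast hkey
      _ ≤ (e.factorial : ℚ) * w.eval (n : ℚ) := by
          apply mul_le_mul_of_nonneg_left hn (by positivity)
      _ = (((e.factorial : ℚ)) • w).eval (n : ℚ) := by simp [Polynomial.eval_smul, smul_eq_mul]
  exact poly_no_dominate e _ (lt_of_le_of_lt (Polynomial.degree_smul_le _ _) hw) h3

lemma fiber_unique {f : ℕ → ℕ} {d a b : ℕ} (hd : 1 ≤ d)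
    (ha : IsFiberMult f d a) (hb : IsFiberMult f d b) : a = b := by
  obtain ⟨p, hp, hpe⟩ := ha
  obtain ⟨q, hq, hqe⟩ := hb
  have h1 : (a : ℤ) ≤ (b : ℤ) := by
    apply fiber_le d hd _ _ (q - p) (lt_of_le_of_lt (degree_sub_le _ _) (max_lt hq hp))
    filter_upwards [hpe, hqe] with n h1 h2
    rw [eval_sub]
    push_cast
    linarith
  have h2 : (b : ℤ) ≤ (a : ℤ) := by
    apply fiber_le d hd _ _ (p - q) (lt_of_le_of_lt (degree_sub_le _ _) (max_lt hp hq))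
    filter_upwards [hpe, hqe] with n h1 h2
    rw [eval_sub]
    push_cast
    linarith
  exact_mod_cast le_antisymm h1 h2

lemma colon_eq_top_of_mLength_zero (J I : Ideal R)
    (h : mLength R (R ⧸ (Submodule.colon J I)) = ((0 : ℕ) : WithBot ℕ∞)) :
    Submodule.colon J I = ⊤ := by
  by_contra hc
  have hsub : ¬ Subsingleton (R ⧸ (Submodule.colon J I)) := by
    rw [Submodule.Quotient.subsingleton_iff]
    exact hc
  have : Nontrivial (R ⧸ (Submodule.colon J I)) := not_subsingleton_iff_nontrivial.mp hsub
  have hbt : (⊥ : Submodule R (R ⧸ (Submodule.colon J I))) < ⊤ := bot_lt_top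
  have hchain : (1 : WithBot ℕ∞) ≤ mLength R (R ⧸ (Submodule.colon J I)) := by
    unfold mLength
    let p : LTSeries (Submodule R (R ⧸ (Submodule.colon J I))) :=
      RelSeries.fromListIsChain [⊥, ⊤] (by simp) (by simp [List.isChain_cons_cons, hbt])
    have hp := Order.LTSeries.length_le_krullDim p
    have hlen : p.length = 1 := by simp [p, RelSeries.fromListIsChain]
    rwa [hlen] at hp
  rw [h] at hchain
  norm_num at hchain

lemma le_of_colon_eq_top (J I : Ideal R)
    (h : Submodule.colon J I = ⊤) : I ≤ J := by
  intro x hx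
  have h1 : (1 : R) ∈ Submodule.colon J I := h ▸ Submodule.mem_top
  simpa using Submodule.mem_colon.mp h1 x hx

end Aux

/-- Let `(R, m)` be a Noetherian local ring of dimension `d ≥ 1`, `J` an `m`-primary ideal,
and `I = (J, h₁, …, h_m)` integral over `J` with reduction number `s = red_J(I)`. Then
`f₀(I) ≤ (1 + λ(R/(J:I))·[C(m+s, s) − 1])·f₀(J)`. -/
theorem f0_le_f0_bound
    (R : Type*) [CommRing R] [IsNoetherianRing R] [IsLocalRing R]
    (d : ℕ) (hd : 1 ≤ d) (hdim : ringKrullDim R = d)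
    (J I : Ideal R) (m : ℕ) (h : Fin m → R) (hJI : I = J ⊔ Ideal.span (Set.range h))
    (hJ : J.radical = maximalIdeal R) (hI : I.radical = maximalIdeal R)
    (hred : IsReduction J I)
    (f0J f0I : ℕ) (hf0J : HasFiberMult J d f0J) (hf0I : HasFiberMult I d f0I)
    (lam : ℕ) (hlam : mLength R (R ⧸ (Submodule.colon J I)) = (lam : WithBot ℕ∞)) :
    (f0I : ℤ) ≤ (1 + (lam : ℤ) * ((m + redNum J I).choose (redNum J I) - 1)) * f0J := by
  classical
  set s := redNum J I with hsdef
  have hsmem : I ^ (s + 1) = J * I ^ s := Nat.sInf_mem hred.2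
  by_cases hlam0 : lam = 0
  · -- degenerate case: I = J
    subst hlam0
    have hcol : Submodule.colon J I = ⊤ :=
      colon_eq_top_of_mLength_zero J I (by exact_mod_cast hlam)
    have hIJ : I = J := le_antisymm (le_of_colon_eq_top J I hcol) hred.1
    rw [hIJ] at hf0I
    have hff : f0I = f0J := fiber_unique hd hf0I hf0J
    subst hff
    have hC1 : 1 ≤ (m + s).choose s := Nat.choose_pos (Nat.le_add_left s m)
    push_cast
    nlinarith [Int.natCast_nonneg f0I]
  · have hlam1 : 1 ≤ lam := Nat.one_le_iff_ne_zero.mpr hlam0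
    have hC1 : 1 ≤ (m + s).choose s := Nat.choose_pos (Nat.le_add_left s m)
    suffices hkey : (f0I : ℤ) ≤ (((m + s).choose s : ℤ)) * f0J by
      refine le_trans hkey ?_
      have h1 : (1:ℤ) ≤ (lam : ℤ) := by exact_mod_cast hlam1
      have h2 : (1:ℤ) ≤ ((m + s).choose s : ℤ) := by exact_mod_cast hC1
      have h3 : (0:ℤ) ≤ (f0J : ℤ) := Int.natCast_nonneg _
      nlinarith [mul_nonneg (mul_nonneg (sub_nonneg.mpr h1) (sub_nonneg.mpr h2)) h3]
    -- main case
    obtain ⟨q, hqdeg, hqev⟩ := hf0I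
    obtain ⟨p, hpdeg, hpev⟩ := hf0J
    rw [Filter.eventually_atTop] at hpev
    obtain ⟨n0, hp0⟩ := hpev
    set N : ℕ → ℕ := fun k => (Finset.piAntidiag (Finset.univ : Finset (Fin m)) k).card with hN
    have hNle : ∑ k ∈ Finset.range (s + 1), N k ≤ (m + s).choose s := by
      calc ∑ k ∈ Finset.range (s + 1), N k
          ≤ ∑ k ∈ Finset.range (s + 1), (m + k - 1).choose k :=
            Finset.sum_le_sum fun k _ => card_piAntidiag_le m k
        _ = (m + s).choose s := sum_choose_hockey m s
    set w0 : Polynomial ℚ := ∑ k ∈ Finset.range (s + 1),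
      ((N k : ℚ)) • (p.comp (X - Polynomial.C (k : ℚ))) with hw0
    have hw0deg : w0.degree < ((d - 1 : ℕ) : WithBot ℕ) := by
      apply lt_of_le_of_lt (Polynomial.degree_sum_le _ _)
      rw [Finset.sup_lt_iff (by exact WithBot.bot_lt_coe _)]
      intro k hk
      apply lt_of_le_of_lt (Polynomial.degree_smul_le _ _)
      by_cases hpc : p.comp (X - Polynomial.C (k : ℚ)) = 0
      · rw [hpc, Polynomial.degree_zero]; exact WithBot.bot_lt_coe _
      · have hpne : p ≠ 0 := by
          intro h0; rw [h0, Polynomial.zero_comp] at hpc; exact hpc rfl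
        rw [Polynomial.degree_eq_natDegree hpc, Polynomial.natDegree_comp]
        have : (X - Polynomial.C ((k : ℚ))).natDegree = 1 := Polynomial.natDegree_X_sub_C _
        rw [this, mul_one]
        rw [← Polynomial.degree_eq_natDegree hpne]
        exact hpdeg
    apply fiber_le d hd _ _ (w0 - q)
      (lt_of_le_of_lt (Polynomial.degree_sub_le _ _) (max_lt hw0deg hqdeg))
    have hBc : (((((m + s).choose s : ℤ)) * f0J : ℤ) : ℚ) = ((m + s).choose s : ℚ) * (f0J : ℚ) := by
      push_cast; ring
    filter_upwards [hqev, Filter.eventually_ge_atTop (n0 + s + 1)] with n hqn hnge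
    have hns : s ≤ n := by omega
    have hnu : nu (I ^ n) ≤ ∑ k ∈ Finset.range (s + 1), N k * nu (J ^ (n - k)) :=
      nu_pow_bound hJI hsmem hns
    have hchn : (0:ℚ) ≤ ((n + d - 2).choose (d - 1) : ℚ) := by positivity
    have hstep : ((nu (I ^ n) : ℚ)) ≤
        ((m + s).choose s : ℚ) * (f0J : ℚ) * ((n + d - 2).choose (d - 1) : ℚ)
          + w0.eval (n : ℚ) := by
      have hterm : ∀ k ∈ Finset.range (s + 1),
          (N k : ℚ) * ((nu (J ^ (n - k)) : ℚ)) ≤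
            (N k : ℚ) * (f0J : ℚ) * ((n + d - 2).choose (d - 1) : ℚ)
              + (N k : ℚ) * p.eval ((n : ℚ) - (k : ℚ)) := by
        intro k hk
        rw [Finset.mem_range] at hk
        have hkn : k ≤ n := by omega
        have hnk0 : n0 ≤ n - k := by omega
        have hval := hp0 (n - k) hnk0
        have hcast : (((n - k : ℕ)) : ℚ) = (n : ℚ) - (k : ℚ) := by
          push_cast [Nat.cast_sub hkn]; ring
        rw [hval, hcast]
        have hchle : ((n - k + d - 2).choose (d - 1) : ℚ) ≤ ((n + d - 2).choose (d - 1) : ℚ) := by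
          exact_mod_cast Nat.choose_le_choose (d - 1) (by omega)
        have hN0 : (0:ℚ) ≤ (N k : ℚ) := by positivity
        have hf0J0 : (0:ℚ) ≤ (f0J : ℚ) := by positivity
        nlinarith [mul_nonneg (mul_nonneg hN0 hf0J0) (sub_nonneg.mpr hchle)]
      have hw0eval : w0.eval (n : ℚ) =
          ∑ k ∈ Finset.range (s + 1), (N k : ℚ) * p.eval ((n : ℚ) - (k : ℚ)) := by
        rw [hw0, Polynomial.eval_finset_sum]
        refine Finset.sum_congr rfl fun k _ => ?_
        rw [Polynomial.eval_smul, Polynomial.eval_comp, Polynomial.eval_sub,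
          Polynomial.eval_X, Polynomial.eval_C, smul_eq_mul]
      calc ((nu (I ^ n) : ℚ))
          ≤ ∑ k ∈ Finset.range (s + 1), (N k : ℚ) * ((nu (J ^ (n - k)) : ℚ)) := by
            exact_mod_cast hnu
        _ ≤ ∑ k ∈ Finset.range (s + 1),
              ((N k : ℚ) * (f0J : ℚ) * ((n + d - 2).choose (d - 1) : ℚ)
                + (N k : ℚ) * p.eval ((n : ℚ) - (k : ℚ))) := Finset.sum_le_sum hterm
        _ = (∑ k ∈ Finset.range (s + 1), (N k : ℚ)) * (f0J : ℚ)
              * ((n + d - 2).choose (d - 1) : ℚ) + w0.eval (n : ℚ) := by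
            rw [Finset.sum_add_distrib, hw0eval, ← Finset.sum_mul, ← Finset.sum_mul]
        _ ≤ ((m + s).choose s : ℚ) * (f0J : ℚ) * ((n + d - 2).choose (d - 1) : ℚ)
              + w0.eval (n : ℚ) := by
            have hsum : (∑ k ∈ Finset.range (s + 1), (N k : ℚ)) ≤ ((m + s).choose s : ℚ) := by
              exact_mod_cast hNle
            have hf0J0 : (0:ℚ) ≤ (f0J : ℚ) := by positivity
            nlinarith [mul_nonneg (mul_nonneg (sub_nonneg.mpr hsum) hf0J0) hchn]
    rw [hBc, Polynomial.eval_sub]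
    have hqn' : ((nu (I ^ n) : ℚ)) =
        (f0I : ℚ) * ((n + d - 2).choose (d - 1) : ℚ) + q.eval (n : ℚ) := hqn
    push_cast
    push_cast at hqn' hstep
    linarith
end

section
/- Let (R, m) be a Noetherian local ring of dimension d ≥ 1, J an m-primary ideal, and I an m-primary ideal with J ⊆ I and J a reduction of I. Then f₀(I) − f₀(J) ≤ e₁(I) − e₁(J). -/
open Filter IsLocalRing Polynomial
open Topology

section Aux

/- ============ Part 1 : algebraic lemmas ============ -/
variable {R : Type*} [CommRing R]

lemma exists_ltSeries_of_krullDim_eq {α : Type*} [Preorder α] {n : ℕ}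
    (h : Order.krullDim α = (n : WithBot ℕ∞)) : ∃ p : LTSeries α, p.length = n := by
  have hne : Nonempty α := by
    by_contra hc
    rw [not_nonempty_iff] at hc
    rw [Order.krullDim_eq_bot] at h
    exact absurd h.symm (by simp)
  by_contra hc
  push_neg at hc
  have hle : ∀ p : LTSeries α, p.length ≤ n := by
    intro p
    have := Order.LTSeries.length_le_krullDim p
    rw [h] at this
    exact_mod_cast this
  have h1 : 1 ≤ n := by
    obtain ⟨x⟩ := hne
    have := hc (RelSeries.singleton _ x)
    simp [RelSeries.singleton] at this
    omega
  have : Order.krullDim α ≤ ((n - 1 : ℕ) : WithBot ℕ∞) := by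
    apply iSup_le
    intro p
    have := hle p
    have hne' := hc p
    have : p.length ≤ n - 1 := by omega
    exact_mod_cast this
  rw [h] at this
  have : n ≤ n - 1 := by exact_mod_cast this
  omega

lemma krullDim_quot_le_of_le {N P : Ideal R} (h : N ≤ P) :
    Order.krullDim (Submodule R (R ⧸ P)) ≤ Order.krullDim (Submodule R (R ⧸ N)) := by
  have hle : N ≤ Submodule.comap (LinearMap.id : R →ₗ[R] R) P := h
  set f : R ⧸ N →ₗ[R] R ⧸ P := Submodule.mapQ N P LinearMap.id hle with hf
  have hsurj : Function.Surjective f := by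
    intro x
    obtain ⟨y, rfl⟩ := Submodule.mkQ_surjective P x
    exact ⟨Submodule.mkQ N y, by rw [hf]; rfl⟩
  exact Order.krullDim_le_of_strictMono (Submodule.comap f)
    (Monotone.strictMono_of_injective (fun _ _ hab => Submodule.comap_mono hab)
      (Submodule.comap_injective_of_surjective hsurj))

variable [IsNoetherianRing R]

lemma nu_spec (I : Ideal R) : ∃ s : Finset R, s.card = nu I ∧ Ideal.span (s : Set R) = I := by
  have hfg : I.FG := (isNoetherian_def.mp inferInstance) I
  obtain ⟨s, hs⟩ := hfg
  have hne : (nu I) ∈ {n | ∃ s : Finset R, s.card = n ∧ Submodule.span R (s : Set R) = I} :=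
    Nat.sInf_mem ⟨s.card, s, rfl, hs⟩
  exact hne

omit [IsNoetherianRing R] in
lemma nu_le_card {I : Ideal R} {s : Finset R} (hs : Ideal.span (s : Set R) = I) :
    nu I ≤ s.card :=
  Nat.sInf_le ⟨s, rfl, hs⟩

lemma exists_chain_of_span [DecidableEq R] :
    ∀ n (J I : Ideal R), J ≤ I → (∃ u : Finset R, u.card ≤ n ∧ J ⊔ Ideal.span (u : Set R) = I) →
    ∃ c : LTSeries (Ideal R), c.head = J ∧ c.last = I ∧ nu I ≤ nu J + c.length := by
  intro n
  induction n with
  | zero =>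
    intro J I hJI ⟨u, hcard, hspan⟩
    have : u = ∅ := Finset.card_eq_zero.mp (Nat.le_zero.mp hcard)
    subst this
    simp only [Finset.coe_empty, Ideal.span_empty, sup_bot_eq] at hspan
    subst hspan
    exact ⟨RelSeries.singleton _ J, RelSeries.head_singleton _, RelSeries.last_singleton _,
      by simp⟩
  | succ n ih =>
    intro J I hJI ⟨u, hcard, hspan⟩
    by_cases hex : ∃ u' : Finset R, u'.card ≤ n ∧ J ⊔ Ideal.span (u' : Set R) = I
    · exact ih J I hJI hex
    · push_neg at hex
      have hune : u.Nonempty := by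
        rcases Finset.eq_empty_or_nonempty u with rfl | h
        · exact absurd (hex ∅ (by simp)) (by simpa using hspan)
        · exact h
      obtain ⟨x, hx⟩ := hune
      set I' : Ideal R := J ⊔ Ideal.span ((u.erase x : Finset R) : Set R) with hI'
      have hcard' : (u.erase x).card ≤ n := by
        have := Finset.card_erase_of_mem hx
        omega
      have hI'ne : I' ≠ I := fun hcon => hex (u.erase x) hcard' hcon
      have hspanu : Ideal.span (u : Set R) ≤ I := hspan ▸ le_sup_right
      have hI'le : I' ≤ I := by
        rw [hI']
        refine sup_le hJI (le_trans (Ideal.span_mono ?_) hspanu)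
        exact_mod_cast Finset.erase_subset x u
      have hI'lt : I' < I := lt_of_le_of_ne hI'le hI'ne
      obtain ⟨c, hhead, hlast, hnu⟩ := ih J I' le_sup_left ⟨u.erase x, hcard', rfl⟩
      refine ⟨c.snoc I (hlast ▸ hI'lt), by simpa using hhead, by simp, ?_⟩
      obtain ⟨s, hscard, hsspan⟩ := nu_spec I'
      have hspan2 : J ⊔ Ideal.span ((insert x (u.erase x) : Finset R) : Set R) = I := by
        rw [Finset.insert_erase hx]; exact hspan
      rw [Finset.coe_insert, Ideal.span_insert] at hspan2
      have hins : Ideal.span ((insert x s : Finset R) : Set R) = I := by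
        rw [Finset.coe_insert, Ideal.span_insert, hsspan, hI', sup_left_comm]
        exact hspan2
      have : nu I ≤ (insert x s).card := nu_le_card hins
      have hc1 : (insert x s).card ≤ s.card + 1 := Finset.card_insert_le _ _
      have hlen : (c.snoc I (hlast ▸ hI'lt)).length = c.length + 1 := rfl
      omega

lemma nu_add_length_le {J I : Ideal R} (h : J ≤ I) {a b : ℕ}
    (ha : Order.krullDim (Submodule R (R ⧸ I)) = (a : WithBot ℕ∞))
    (hb : Order.krullDim (Submodule R (R ⧸ J)) = (b : WithBot ℕ∞)) :
    nu I + a ≤ nu J + b := by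
  obtain ⟨u, hu⟩ := (isNoetherian_def.mp inferInstance) I
  classical
  obtain ⟨c, hchead, hclast, hcnu⟩ := exists_chain_of_span u.card J I h
    ⟨u, le_rfl, by show J ⊔ Submodule.span R (u : Set R) = I; rw [hu]; exact sup_eq_right.mpr h⟩
  obtain ⟨q, hq⟩ := exists_ltSeries_of_krullDim_eq ha
  have hqhead : q.head = ⊥ := by
    by_contra hne
    have hlt : (⊥ : Submodule R (R ⧸ I)) < q.head := bot_lt_iff_ne_bot.mpr hne
    have := Order.LTSeries.length_le_krullDim (q.cons ⊥ hlt)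
    rw [ha] at this
    have hlen : (q.cons ⊥ hlt).length = q.length + 1 := by simp
    rw [hlen, hq] at this
    have : a + 1 ≤ a := by exact_mod_cast this
    omega
  set emb := Submodule.comapMkQOrderEmbedding (M := R) I with hemb
  have hembs : StrictMono emb := emb.strictMono
  set q' : LTSeries (Ideal R) := q.map emb hembs with hq'
  have hq'head : q'.head = I := by
    rw [hq', LTSeries.head_map, hqhead]
    show Submodule.comap (Submodule.mkQ I) ⊥ = I
    simp
  have hq'len : q'.length = a := hq
  have hconn : c.last = q'.head := by rw [hclast, hq'head]
  set big := c.smash q' hconn with hbig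
  have hbiglen : big.length = c.length + a := by
    rw [hbig]; show c.length + q'.length = _; rw [hq'len]
  have hbighead : big.head = J := by rw [hbig, RelSeries.head_smash, hchead]
  have hJle : ∀ i, J ≤ big i := by
    intro i
    rw [← hbighead]
    exact LTSeries.monotone big (Fin.zero_le i)
  set sub : LTSeries {p' : Ideal R // J ≤ p'} :=
    ⟨big.length, fun i => ⟨big i, hJle i⟩, fun i => by
      simp only [Subtype.mk_lt_mk]; exact big.step i⟩ with hsub
  set iso := (Submodule.comapMkQRelIso (M := R) J).symm with hiso
  have := Order.LTSeries.length_le_krullDim (sub.map iso iso.strictMono)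
  rw [hb] at this
  have hsublen : (sub.map iso iso.strictMono).length = c.length + a := by
    show sub.length = _
    rw [hsub]
    exact hbiglen
  rw [hsublen] at this
  have hfin : c.length + a ≤ b := by exact_mod_cast this
  omega

/- ============ Part 2 : analytic lemmas ============ -/

open Topology

lemma ascFactorial_eq_prod (n k : ℕ) : n.ascFactorial k = ∏ i ∈ Finset.range k, (n + i) := by
  induction k with
  | zero => simp
  | succ k ih => rw [Nat.ascFactorial_succ, Finset.prod_range_succ, ih, mul_comm]

lemma tendsto_choose_div (k : ℕ) :
    Tendsto (fun n : ℕ => ((n + k - 1).choose k : ℝ) / (n : ℝ) ^ k) atTop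
      (𝓝 (1 / (k.factorial : ℝ))) := by
  have hlim : Tendsto (fun n : ℕ => (∏ i ∈ Finset.range k, (1 + (i : ℝ) / n)) / k.factorial)
      atTop (𝓝 (1 / (k.factorial : ℝ))) := by
    have h1 : Tendsto (fun n : ℕ => ∏ i ∈ Finset.range k, (1 + (i : ℝ) / n)) atTop (𝓝 1) := by
      have := tendsto_finset_prod (f := fun (i : ℕ) (n : ℕ) => (1 + (i : ℝ) / n))
        (x := atTop) (a := fun _ => (1 : ℝ)) (Finset.range k) (fun i _ => by
          simpa using ((tendsto_const_div_atTop_nhds_zero_nat (i : ℝ)).const_add 1))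
      simpa using this
    simpa using h1.div_const (k.factorial : ℝ)
  apply hlim.congr'
  filter_upwards [eventually_ge_atTop 1] with n hn
  have hn0 : (n : ℝ) ≠ 0 := by
    simp only [ne_eq, Nat.cast_eq_zero]; omega
  have key : ((n + k - 1).choose k : ℝ) * k.factorial = ∏ i ∈ Finset.range k, ((n : ℝ) + i) := by
    have h2 := Nat.ascFactorial_eq_factorial_mul_choose' n k
    rw [ascFactorial_eq_prod] at h2
    have h3 := congrArg (Nat.cast : ℕ → ℝ) h2.symm
    push_cast at h3
    rw [mul_comm] at h3
    exact h3
  have hprod : (∏ i ∈ Finset.range k, (1 + (i : ℝ) / n)) =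
      (∏ i ∈ Finset.range k, ((n : ℝ) + i)) / (n : ℝ) ^ k := by
    have : (n : ℝ) ^ k = ∏ _i ∈ Finset.range k, (n : ℝ) := by
      rw [Finset.prod_const, Finset.card_range]
    rw [this, ← Finset.prod_div_distrib]
    refine Finset.prod_congr rfl fun i _ => ?_
    field_simp
  rw [hprod, ← key]
  have hkf : (k.factorial : ℝ) ≠ 0 := by positivity
  field_simp

lemma tendsto_shift {f : ℕ → ℝ} {k : ℕ} (s : ℕ) {L : ℝ}
    (h : Tendsto (fun n : ℕ => f n / (n : ℝ) ^ k) atTop (𝓝 L)) :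
    Tendsto (fun n : ℕ => f (n + s) / (n : ℝ) ^ k) atTop (𝓝 L) := by
  have h1 : Tendsto (fun n : ℕ => f (n + s) / ((n + s : ℕ) : ℝ) ^ k) atTop (𝓝 L) :=
    h.comp (tendsto_add_atTop_nat s)
  have h2 : Tendsto (fun n : ℕ => (((n + s : ℕ) : ℝ) / n) ^ k) atTop (𝓝 1) := by
    have : Tendsto (fun n : ℕ => 1 + (s : ℝ) / n) atTop (𝓝 1) := by
      simpa using (tendsto_const_div_atTop_nhds_zero_nat (s : ℝ)).const_add 1
    have h3 := this.pow k
    rw [one_pow] at h3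
    apply h3.congr'
    filter_upwards [eventually_ge_atTop 1] with n hn
    have hn0 : (n : ℝ) ≠ 0 := by simp only [ne_eq, Nat.cast_eq_zero]; omega
    push_cast
    rw [add_div, div_self hn0]
  have := h1.mul h2
  rw [mul_one] at this
  apply this.congr'
  filter_upwards [eventually_ge_atTop 1] with n hn
  have hn0 : (n : ℝ) ≠ 0 := by simp only [ne_eq, Nat.cast_eq_zero]; omega
  have hns0 : ((n + s : ℕ) : ℝ) ≠ 0 := by simp only [ne_eq, Nat.cast_eq_zero]; omega
  field_simp
  rw [div_pow, mul_assoc, div_mul_cancel₀ _ (pow_ne_zero k hn0)]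

lemma tendsto_poly_div {p : Polynomial ℚ} {k : ℕ} (hp : p.degree < (k : WithBot ℕ)) :
    Tendsto (fun n : ℕ => ((p.eval (n : ℚ) : ℚ) : ℝ) / (n : ℝ) ^ k) atTop (𝓝 0) := by
  rcases eq_or_ne p 0 with rfl | hne
  · simpa using tendsto_const_nhds (x := (0:ℝ)) (f := atTop (α := ℕ))
  · have hdeg : p.natDegree < k := (Polynomial.natDegree_lt_iff_degree_lt hne).mpr hp
    have heval : ∀ n : ℕ, ((p.eval (n : ℚ) : ℚ) : ℝ) =
        ∑ i ∈ Finset.range (p.natDegree + 1), ((p.coeff i : ℚ) : ℝ) * (n : ℝ) ^ i := by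
      intro n
      rw [Polynomial.eval_eq_sum_range]
      push_cast
      rfl
    have hsum : Tendsto (fun n : ℕ => ∑ i ∈ Finset.range (p.natDegree + 1),
        (((p.coeff i : ℚ) : ℝ) * (n : ℝ) ^ i) / (n : ℝ) ^ k) atTop (𝓝 0) := by
      have := tendsto_finset_sum (f := fun (i : ℕ) (n : ℕ) =>
          (((p.coeff i : ℚ) : ℝ) * (n : ℝ) ^ i) / (n : ℝ) ^ k)
        (x := atTop) (a := fun _ => (0 : ℝ)) (Finset.range (p.natDegree + 1)) (fun i hi => by
          have hik : i < k := by
            have := Finset.mem_range.mp hi; omega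
          have hpow : Tendsto (fun n : ℕ => (n : ℝ) ^ (k - i)) atTop atTop :=
            (tendsto_pow_atTop (by omega)).comp tendsto_natCast_atTop_atTop
          have := (tendsto_const_nhds (x := ((p.coeff i : ℚ) : ℝ))
            (f := atTop (α := ℕ))).div_atTop hpow
          apply this.congr'
          filter_upwards [eventually_ge_atTop 1] with n hn
          have hn0 : (n : ℝ) ≠ 0 := by simp only [ne_eq, Nat.cast_eq_zero]; omega
          have : (n : ℝ) ^ k = (n : ℝ) ^ i * (n : ℝ) ^ (k - i) := by
            rw [← pow_add]; congr 1; omega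
          rw [this]
          field_simp)
      simpa using this
    apply hsum.congr'
    filter_upwards [] with n
    rw [heval, Finset.sum_div]

lemma le_of_eventually_le_div {f g : ℕ → ℝ} {k : ℕ} {a b : ℝ}
    (hf : Tendsto (fun n : ℕ => f n / (n : ℝ) ^ k) atTop (𝓝 a))
    (hg : Tendsto (fun n : ℕ => g n / (n : ℝ) ^ k) atTop (𝓝 b))
    (h : ∀ᶠ n : ℕ in atTop, f n ≤ g n) : a ≤ b := by
  refine le_of_tendsto_of_tendsto hf hg ?_
  filter_upwards [h, eventually_ge_atTop 1] with n hn hn1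
  have hpos : (0 : ℝ) < (n : ℝ) ^ k := by positivity
  exact (div_le_div_iff_of_pos_right hpos).mpr hn


/- ============ Part 3 : bridging lemmas ============ -/

noncomputable def c1 (d n : ℕ) : ℝ := ((n + d - 1).choose d : ℝ)
noncomputable def c2 (d n : ℕ) : ℝ := ((n + d - 2).choose (d - 1) : ℝ)
noncomputable def pev (p : Polynomial ℚ) (n : ℕ) : ℝ := ((p.eval (n : ℚ) : ℚ) : ℝ)

lemma tendsto_c1 (d : ℕ) :
    Tendsto (fun n : ℕ => c1 d n / (n : ℝ) ^ d) atTop (𝓝 (1 / (d.factorial : ℝ))) :=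
  tendsto_choose_div d

lemma tendsto_c2 {d : ℕ} (hd : 1 ≤ d) :
    Tendsto (fun n : ℕ => c2 d n / (n : ℝ) ^ (d - 1)) atTop
      (𝓝 (1 / ((d - 1).factorial : ℝ))) := by
  refine (tendsto_choose_div (d - 1)).congr fun n => ?_
  unfold c2
  congr 3
  omega

lemma tendsto_c2_top {d : ℕ} (hd : 1 ≤ d) :
    Tendsto (fun n : ℕ => c2 d n / (n : ℝ) ^ d) atTop (𝓝 0) := by
  have h := (tendsto_c2 hd).mul (tendsto_const_div_atTop_nhds_zero_nat (1 : ℝ))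
  rw [mul_zero] at h
  apply h.congr'
  filter_upwards [eventually_ge_atTop 1] with n hn
  have hn0 : (n : ℝ) ≠ 0 := by simp only [ne_eq, Nat.cast_eq_zero]; omega
  have hdd : (n : ℝ) ^ d = (n : ℝ) ^ (d - 1) * n := by
    rw [← pow_succ]; congr 1; omega
  rw [hdd]
  field_simp

lemma tendsto_pev {p : Polynomial ℚ} {k : ℕ} (hp : p.degree < (k : WithBot ℕ)) :
    Tendsto (fun n : ℕ => pev p n / (n : ℝ) ^ k) atTop (𝓝 0) :=
  tendsto_poly_div hp

lemma deg_lt_d {d : ℕ} {p : Polynomial ℚ} (hp : p.degree < ((d - 1 : ℕ) : WithBot ℕ)) :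
    p.degree < (d : WithBot ℕ) :=
  hp.trans_le (by exact_mod_cast Nat.sub_le d 1)

lemma tendsto_hilb {d : ℕ} (hd : 1 ≤ d) {e0 e1 : ℤ} {q : Polynomial ℚ} {lam : ℕ → ℕ}
    (hdeg : q.degree < ((d - 1 : ℕ) : WithBot ℕ))
    (hev : ∀ᶠ n : ℕ in atTop, (lam n : ℚ) =
      e0 * ((n + d - 1).choose d) - e1 * ((n + d - 2).choose (d - 1)) + q.eval (n : ℚ)) :
    Tendsto (fun n : ℕ => (lam n : ℝ) / (n : ℝ) ^ d) atTop (𝓝 ((e0 : ℝ) / d.factorial)) := by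
  have hq := tendsto_pev (k := d) (deg_lt_d hdeg)
  have hcomb := (((tendsto_c1 d).const_mul (e0 : ℝ)).sub
    ((tendsto_c2_top hd).const_mul (e1 : ℝ))).add hq
  have hval : (e0 : ℝ) * (1 / d.factorial) - (e1 : ℝ) * 0 + 0 = (e0 : ℝ) / d.factorial := by
    ring
  rw [hval] at hcomb
  apply hcomb.congr'
  filter_upwards [hev] with n hn
  have hcast := congrArg (fun x : ℚ => (x : ℝ)) hn
  push_cast at hcast
  rw [hcast]
  unfold c1 c2 pev
  push_cast
  ring

lemma tendsto_fib {d : ℕ} (hd : 1 ≤ d) {f0 : ℕ} {p : Polynomial ℚ} {f : ℕ → ℕ}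
    (hdeg : p.degree < ((d - 1 : ℕ) : WithBot ℕ))
    (hev : ∀ᶠ n : ℕ in atTop, (f n : ℚ) =
      f0 * ((n + d - 2).choose (d - 1)) + p.eval (n : ℚ)) :
    Tendsto (fun n : ℕ => (f n : ℝ) / (n : ℝ) ^ (d - 1)) atTop
      (𝓝 ((f0 : ℝ) / (d - 1).factorial)) := by
  have hp := tendsto_pev (k := d - 1) hdeg
  have hcomb := ((tendsto_c2 hd).const_mul (f0 : ℝ)).add hp
  have hval : (f0 : ℝ) * (1 / (d - 1).factorial) + 0 = (f0 : ℝ) / (d - 1).factorial := by ring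
  rw [hval] at hcomb
  apply hcomb.congr'
  filter_upwards [hev] with n hn
  have hcast := congrArg (fun x : ℚ => (x : ℝ)) hn
  push_cast at hcast
  rw [hcast]
  unfold c2 pev
  push_cast
  ring

lemma tendsto_fib_top {d : ℕ} (hd : 1 ≤ d) {f0 : ℕ} {p : Polynomial ℚ} {f : ℕ → ℕ}
    (hdeg : p.degree < ((d - 1 : ℕ) : WithBot ℕ))
    (hev : ∀ᶠ n : ℕ in atTop, (f n : ℚ) =
      f0 * ((n + d - 2).choose (d - 1)) + p.eval (n : ℚ)) :
    Tendsto (fun n : ℕ => (f n : ℝ) / (n : ℝ) ^ d) atTop (𝓝 0) := by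
  have hp := tendsto_pev (k := d) (deg_lt_d hdeg)
  have hcomb := ((tendsto_c2_top hd).const_mul (f0 : ℝ)).add hp
  rw [show (f0 : ℝ) * 0 + 0 = 0 by ring] at hcomb
  apply hcomb.congr'
  filter_upwards [hev] with n hn
  have hcast := congrArg (fun x : ℚ => (x : ℝ)) hn
  push_cast at hcast
  rw [hcast]
  unfold c2 pev
  push_cast
  ring

end Aux

/-- Let `(R, m)` be a Noetherian local ring of dimension `d ≥ 1`, `J` an `m`-primary ideal,
and `I` an `m`-primary ideal with `J ⊆ I` and `J` a reduction of `I`. Then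
`f₀(I) − f₀(J) ≤ e₁(I) − e₁(J)`. -/
theorem f0_sub_f0_le_e1_sub_e1
    (R : Type*) [CommRing R] [IsNoetherianRing R] [IsLocalRing R]
    (d : ℕ) (hd : 1 ≤ d) (hdim : ringKrullDim R = d)
    (J I : Ideal R)
    (hJ : J.radical = maximalIdeal R) (hI : I.radical = maximalIdeal R)
    (hred : IsReduction J I)
    (e0J e1J e0I e1I : ℤ)
    (hJc : HasHilbertCoeffs J d e0J e1J) (hIc : HasHilbertCoeffs I d e0I e1I)
    (f0J f0I : ℕ) (hf0J : HasFiberMult J d f0J) (hf0I : HasFiberMult I d f0I) :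
    (f0I : ℤ) - f0J ≤ e1I - e1J := by
  classical
  obtain ⟨hJI, s, hs⟩ := hred
  obtain ⟨qJ, lamJ, hdegJ, hmJ, hevJ⟩ := hJc
  obtain ⟨qI, lamI, hdegI, hmI, hevI⟩ := hIc
  obtain ⟨pJ, hdegpJ, hevpJ⟩ := hf0J
  obtain ⟨pI, hdegpI, hevpI⟩ := hf0I
  -- (i) the key combinatorial inequality
  have h1 : ∀ n : ℕ, nu (I ^ n) + lamI n ≤ nu (J ^ n) + lamJ n := by
    intro n
    have hIn := hmI n
    have hJn := hmJ n
    simp only [mLength] at hIn hJn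
    exact nu_add_length_le (Ideal.pow_right_mono hJI n) hIn hJn
  -- (ii) the reduction inequality
  have hpow : ∀ n : ℕ, I ^ (n + s) = J ^ n * I ^ s := by
    intro n
    induction n with
    | zero => simp
    | succ n ih =>
      have e1 : n + 1 + s = (n + s) + 1 := by omega
      rw [e1, pow_succ, ih, mul_assoc, ← pow_succ, hs]
      ring
  have h2 : ∀ n : ℕ, lamJ n ≤ lamI (n + s) := by
    intro n
    have hle : I ^ (n + s) ≤ J ^ n := by
      rw [hpow n]; exact Ideal.mul_le_left
    have hdim2 := krullDim_quot_le_of_le hle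
    have hJn := hmJ n
    have hIn := hmI (n + s)
    simp only [mLength] at hJn hIn
    rw [hJn, hIn] at hdim2
    exact_mod_cast hdim2
  -- limits
  have hLI : Tendsto (fun n : ℕ => (lamI n : ℝ) / (n : ℝ) ^ d) atTop
      (𝓝 ((e0I : ℝ) / d.factorial)) := tendsto_hilb hd hdegI hevI
  have hLJ : Tendsto (fun n : ℕ => (lamJ n : ℝ) / (n : ℝ) ^ d) atTop
      (𝓝 ((e0J : ℝ) / d.factorial)) := tendsto_hilb hd hdegJ hevJ
  have hFI : Tendsto (fun n : ℕ => ((nu (I ^ n) : ℕ) : ℝ) / (n : ℝ) ^ d) atTop (𝓝 0) :=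
    tendsto_fib_top hd hdegpI hevpI
  have hFJ : Tendsto (fun n : ℕ => ((nu (J ^ n) : ℕ) : ℝ) / (n : ℝ) ^ d) atTop (𝓝 0) :=
    tendsto_fib_top hd hdegpJ hevpJ
  have hfacd : (0 : ℝ) < (d.factorial : ℝ) := by positivity
  have hfacd1 : (0 : ℝ) < ((d - 1).factorial : ℝ) := by positivity
  -- step 1 : e0I ≤ e0J
  have hsumI : Tendsto (fun n : ℕ => (((nu (I ^ n) : ℕ) : ℝ) + (lamI n : ℝ)) / (n : ℝ) ^ d)
      atTop (𝓝 ((e0I : ℝ) / d.factorial)) := by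
    have := hFI.add hLI
    rw [zero_add] at this
    exact this.congr fun n => by rw [add_div]
  have hsumJ : Tendsto (fun n : ℕ => (((nu (J ^ n) : ℕ) : ℝ) + (lamJ n : ℝ)) / (n : ℝ) ^ d)
      atTop (𝓝 ((e0J : ℝ) / d.factorial)) := by
    have := hFJ.add hLJ
    rw [zero_add] at this
    exact this.congr fun n => by rw [add_div]
  have he0le : (e0I : ℝ) / d.factorial ≤ (e0J : ℝ) / d.factorial := by
    refine le_of_eventually_le_div hsumI hsumJ ?_
    filter_upwards [] with n
    exact_mod_cast h1 n
  -- step 2 : e0J ≤ e0I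
  have hLIshift : Tendsto (fun n : ℕ => (lamI (n + s) : ℝ) / (n : ℝ) ^ d) atTop
      (𝓝 ((e0I : ℝ) / d.factorial)) := tendsto_shift s hLI
  have he0ge : (e0J : ℝ) / d.factorial ≤ (e0I : ℝ) / d.factorial := by
    refine le_of_eventually_le_div hLJ hLIshift ?_
    filter_upwards [] with n
    exact_mod_cast h2 n
  have he0 : (e0I : ℝ) = (e0J : ℝ) := by
    have heq := le_antisymm he0le he0ge
    field_simp at heq
    exact_mod_cast heq
  -- step 3
  set famI : ℕ → ℝ := fun n =>
    (f0I : ℝ) * c2 d n + pev pI n - (e1I : ℝ) * c2 d n + pev qI n with hfamI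
  set famJ : ℕ → ℝ := fun n =>
    (f0J : ℝ) * c2 d n + pev pJ n - (e1J : ℝ) * c2 d n + pev qJ n with hfamJ
  have hlim3I : Tendsto (fun n : ℕ => famI n / (n : ℝ) ^ (d - 1)) atTop
      (𝓝 (((f0I : ℝ) - (e1I : ℝ)) / (d - 1).factorial)) := by
    have hcomb := ((((tendsto_c2 hd).const_mul ((f0I : ℕ) : ℝ)).add
      (tendsto_pev (k := d - 1) hdegpI)).sub
      ((tendsto_c2 hd).const_mul ((e1I : ℤ) : ℝ))).add (tendsto_pev (k := d - 1) hdegI)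
    have hval : ((f0I : ℕ) : ℝ) * (1 / (d - 1).factorial) + 0 -
        ((e1I : ℤ) : ℝ) * (1 / (d - 1).factorial) + 0
        = ((f0I : ℝ) - (e1I : ℝ)) / (d - 1).factorial := by ring
    rw [hval] at hcomb
    exact hcomb.congr fun n => by rw [hfamI]; simp only []; ring
  have hlim3J : Tendsto (fun n : ℕ => famJ n / (n : ℝ) ^ (d - 1)) atTop
      (𝓝 (((f0J : ℝ) - (e1J : ℝ)) / (d - 1).factorial)) := by
    have hcomb := ((((tendsto_c2 hd).const_mul ((f0J : ℕ) : ℝ)).add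
      (tendsto_pev (k := d - 1) hdegpJ)).sub
      ((tendsto_c2 hd).const_mul ((e1J : ℤ) : ℝ))).add (tendsto_pev (k := d - 1) hdegJ)
    have hval : ((f0J : ℕ) : ℝ) * (1 / (d - 1).factorial) + 0 -
        ((e1J : ℤ) : ℝ) * (1 / (d - 1).factorial) + 0
        = ((f0J : ℝ) - (e1J : ℝ)) / (d - 1).factorial := by ring
    rw [hval] at hcomb
    exact hcomb.congr fun n => by rw [hfamJ]; simp only []; ring
  have hev3 : ∀ᶠ n : ℕ in atTop, famI n ≤ famJ n := by
    filter_upwards [hevI, hevJ, hevpI, hevpJ] with n hnI hnJ hnpI hnpJ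
    have hcI := congrArg (fun x : ℚ => (x : ℝ)) hnI
    have hcJ := congrArg (fun x : ℚ => (x : ℝ)) hnJ
    have hcpI := congrArg (fun x : ℚ => (x : ℝ)) hnpI
    have hcpJ := congrArg (fun x : ℚ => (x : ℝ)) hnpJ
    push_cast at hcI hcJ hcpI hcpJ
    have hineq : ((nu (I ^ n) : ℕ) : ℝ) + (lamI n : ℝ) ≤
        ((nu (J ^ n) : ℕ) : ℝ) + (lamJ n : ℝ) := by exact_mod_cast h1 n
    rw [hfamI, hfamJ]
    simp only []
    unfold c1 c2 pev at *
    rw [hcI, hcJ] at hineq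
    rw [hcpI, hcpJ] at hineq
    push_cast at hineq ⊢
    nlinarith [hineq, he0]
  have hfinal : ((f0I : ℝ) - (e1I : ℝ)) / (d - 1).factorial ≤
      ((f0J : ℝ) - (e1J : ℝ)) / (d - 1).factorial :=
    le_of_eventually_le_div hlim3I hlim3J hev3
  have : (f0I : ℝ) - (e1I : ℝ) ≤ (f0J : ℝ) - (e1J : ℝ) :=
    (div_le_div_iff_of_pos_right hfacd1).mp hfinal
  have hZ : ((f0I : ℤ) : ℝ) - ((f0J : ℤ) : ℝ) ≤ ((e1I : ℝ)) - ((e1J : ℝ)) := by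
    push_cast
    linarith
  exact_mod_cast hZ
end

section
/- Let (R, m) be a 1-dimensional Cohen–Macaulay Noetherian local ring with infinite residue field, and let x ∈ m^s be a parameter. Then λ(R/(x)) ≥ s · e₀(m), where e₀(m) is the multiplicity of R. -/
open Filter IsLocalRing Polynomial

/-- `R` is a Cohen–Macaulay local ring of dimension `d`: there is a regular sequence of
length `d` inside the maximal ideal. -/
def IsCohenMacaulayLocalOfDim (R : Type*) [CommRing R] [IsLocalRing R] (d : ℕ) : Prop :=
  ∃ xs : List R, xs.length = d ∧ (∀ x ∈ xs, x ∈ maximalIdeal R) ∧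
    RingTheory.Sequence.IsRegular R xs

/-- `R` is a Gorenstein local ring of dimension `d`: it is Cohen–Macaulay of dimension `d`
and some system of parameters (maximal regular sequence in `m`) generates an irreducible
ideal. -/
def IsGorensteinLocalOfDim (R : Type*) [CommRing R] [IsLocalRing R] (d : ℕ) : Prop :=
  ∃ xs : List R, xs.length = d ∧ (∀ x ∈ xs, x ∈ maximalIdeal R) ∧
    RingTheory.Sequence.IsRegular R xs ∧ InfIrred (Ideal.span {x | x ∈ xs})

section Aux

lemma auxHeightKey {C : Type*} [PartialOrder C] {c d : C} (hcd : c < d) :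
    Order.height c + 1 ≤ Order.height d := by
  rw [Order.height_eq_iSup_lt_height d]
  exact le_iSup₂_of_le c hcd le_rfl

lemma auxHeightProd {A B : Type*} [PartialOrder A] [PartialOrder B] :
    ∀ (n : ℕ) (p : LTSeries (A × B)), p.length = n →
      (n : ℕ∞) ≤ Order.height p.last.1 + Order.height p.last.2 := by
  intro n
  induction n with
  | zero => intro p hp; simp
  | succ n ih =>
    intro p hp
    have hlen : p.eraseLast.length = n := by simp [RelSeries.eraseLast, hp]
    have hlt : p.eraseLast.last < p.last := p.eraseLast_last_rel_last (by omega)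
    have IH := ih p.eraseLast hlen
    rcases Prod.lt_iff.mp hlt with ⟨h1, h2⟩ | ⟨h1, h2⟩
    · calc ((n + 1 : ℕ) : ℕ∞) = (n : ℕ∞) + 1 := by push_cast; ring
        _ ≤ (Order.height p.eraseLast.last.1 + Order.height p.eraseLast.last.2) + 1 :=
            add_le_add IH le_rfl
        _ = (Order.height p.eraseLast.last.1 + 1) + Order.height p.eraseLast.last.2 := by ring
        _ ≤ Order.height p.last.1 + Order.height p.last.2 :=
            add_le_add (auxHeightKey h1) (Order.height_mono h2)
    · calc ((n + 1 : ℕ) : ℕ∞) = (n : ℕ∞) + 1 := by push_cast; ring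
        _ ≤ (Order.height p.eraseLast.last.1 + Order.height p.eraseLast.last.2) + 1 :=
            add_le_add IH le_rfl
        _ = Order.height p.eraseLast.last.1 + (Order.height p.eraseLast.last.2 + 1) := by ring
        _ ≤ Order.height p.last.1 + Order.height p.last.2 :=
            add_le_add (Order.height_mono h1) (auxHeightKey h2)

lemma auxKrullDimProd {A B : Type*} [PartialOrder A] [PartialOrder B] (a b : ℕ)
    (ha : Order.krullDim A ≤ ((a : ℕ∞) : WithBot ℕ∞))
    (hb : Order.krullDim B ≤ ((b : ℕ∞) : WithBot ℕ∞)) :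
    Order.krullDim (A × B) ≤ (((a + b : ℕ) : ℕ∞) : WithBot ℕ∞) := by
  rcases isEmpty_or_nonempty (A × B) with h | h
  · rw [Order.krullDim_eq_bot]; exact bot_le
  · refine iSup_le fun p => ?_
    have h1 : (p.length : ℕ∞) ≤ Order.height p.last.1 + Order.height p.last.2 :=
      auxHeightProd _ p rfl
    have ha' : Order.height p.last.1 ≤ (a : ℕ∞) :=
      WithBot.coe_le_coe.mp ((Order.height_le_krullDim p.last.1).trans ha)
    have hb' : Order.height p.last.2 ≤ (b : ℕ∞) :=
      WithBot.coe_le_coe.mp ((Order.height_le_krullDim p.last.2).trans hb)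
    exact WithBot.coe_le_coe.mpr (h1.trans (by push_cast; exact add_le_add ha' hb'))

variable {R : Type*} [CommRing R]

lemma mLength_le_of_surjective {M N : Type*} [AddCommGroup M] [Module R M] [AddCommGroup N]
    [Module R N] (f : M →ₗ[R] N) (hf : Function.Surjective f) :
    mLength R N ≤ mLength R M :=
  by
  have hmono : Monotone (Submodule.comap f : Submodule R N → Submodule R M) :=
    fun _ _ hpq => Submodule.comap_mono hpq
  exact Order.krullDim_le_of_strictMono (Submodule.comap f)
    (hmono.strictMono_of_injective fun p q h => by
      rw [← Submodule.map_comap_eq_of_surjective hf p,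
        ← Submodule.map_comap_eq_of_surjective hf q, h])

lemma mLength_congr {M N : Type*} [AddCommGroup M] [Module R M] [AddCommGroup N]
    [Module R N] (e : M ≃ₗ[R] N) : mLength R M = mLength R N :=
  Order.krullDim_eq_of_orderIso (Submodule.orderIsoMapComap e)

lemma mLength_le_nat_add {M : Type*} [AddCommGroup M] [Module R M] (N : Submodule R M)
    (a b : ℕ) (ha : mLength R N ≤ ((a : ℕ∞) : WithBot ℕ∞))
    (hb : mLength R (M ⧸ N) ≤ ((b : ℕ∞) : WithBot ℕ∞)) :
    mLength R M ≤ (((a + b : ℕ) : ℕ∞) : WithBot ℕ∞) := by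
  refine le_trans (Order.krullDim_le_of_strictMono
    (fun p => (Submodule.comap N.subtype p, Submodule.map N.mkQ p)) ?_)
    (auxKrullDimProd a b ha hb)
  intro p q hpq
  refine lt_of_le_of_ne ⟨Submodule.comap_mono hpq.le, Submodule.map_mono hpq.le⟩ ?_
  intro hEq
  have h1 : p ⊓ N = q ⊓ N := by
    have := congrArg (Submodule.map N.subtype) (congrArg Prod.fst hEq)
    simpa [Submodule.map_comap_subtype, inf_comm] using this
  have h2 : p ⊔ N = q ⊔ N := by
    have := congrArg (Submodule.comap N.mkQ) (congrArg Prod.snd hEq)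
    simpa [Submodule.comap_map_mkQ, sup_comm] using this
  exact hpq.ne (eq_of_le_of_inf_le_of_sup_le hpq.le h1.ge h2.ge)

end Aux

lemma key_pow_bound {R : Type*} [CommRing R] (x : R) (hxreg : x ∈ nonZeroDivisors R) (lam : ℕ)
    (hlam : mLength R (R ⧸ Ideal.span {x}) = ((lam : ℕ∞) : WithBot ℕ∞)) :
    ∀ n : ℕ, mLength R (R ⧸ (Ideal.span {x} : Ideal R) ^ n) ≤ (((n * lam : ℕ) : ℕ∞) : WithBot ℕ∞) := by
  intro n
  induction n with
  | zero =>
    have hsub : Subsingleton (R ⧸ (Ideal.span {x} : Ideal R) ^ 0) := by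
      rw [pow_zero, Ideal.one_eq_top]
      exact Submodule.Quotient.subsingleton_iff.mpr rfl
    have : Subsingleton (Submodule R (R ⧸ (Ideal.span {x} : Ideal R) ^ 0)) :=
      (Submodule.subsingleton_iff R).mpr hsub
    calc mLength R (R ⧸ (Ideal.span {x} : Ideal R) ^ 0) ≤ 0 :=
          Order.krullDim_nonpos_of_subsingleton
      _ ≤ _ := by simp
  | succ k ih =>
    set I : Ideal R := Ideal.span {x} with hI
    set S : Ideal R := I ^ (k + 1) with hS
    have hST : S ≤ I := Ideal.pow_le_self (Nat.succ_ne_zero k)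
    set N : Submodule R (R ⧸ S) := Submodule.map S.mkQ I with hN
    have e1 : ((R ⧸ S) ⧸ N) ≃ₗ[R] R ⧸ I :=
      Submodule.quotientQuotientEquivQuotient S I hST
    set f : R →ₗ[R] R ⧸ S := S.mkQ ∘ₗ (LinearMap.toSpanSingleton R R x) with hf
    have hker : LinearMap.ker f = I ^ k := by
      ext r
      simp only [hf, LinearMap.mem_ker, LinearMap.coe_comp, Function.comp_apply,
        LinearMap.toSpanSingleton_apply, Submodule.mkQ_apply, Submodule.Quotient.mk_eq_zero,
        hS, hI, Ideal.span_singleton_pow, Ideal.mem_span_singleton, smul_eq_mul]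
      constructor
      · rintro ⟨c, hc⟩
        refine ⟨c, ?_⟩
        have h0 : (r - x ^ k * c) * x = 0 := by
          have : r * x = x ^ k * c * x := by rw [hc]; ring
          rw [sub_mul, this, sub_self]
        exact sub_eq_zero.mp ((mul_right_mem_nonZeroDivisors_eq_zero_iff hxreg).mp h0)
      · rintro ⟨c, hc⟩
        exact ⟨c, by rw [hc]; ring⟩
    have hrange : LinearMap.range f = N := by
      rw [hf, LinearMap.range_comp, ← LinearMap.span_singleton_eq_range]
    have e2 : (R ⧸ (I ^ k : Ideal R)) ≃ₗ[R] N :=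
      ((Submodule.quotEquivOfEq _ _ hker.symm).trans f.quotKerEquivRange).trans
        (LinearEquiv.ofEq _ _ hrange)
    have hNb : mLength R N ≤ (((k * lam : ℕ) : ℕ∞) : WithBot ℕ∞) := by
      rw [← mLength_congr e2]; exact ih
    have hQb : mLength R ((R ⧸ S) ⧸ N) ≤ ((lam : ℕ∞) : WithBot ℕ∞) := by
      rw [mLength_congr e1, hlam]
    have := mLength_le_nat_add N (k * lam) lam hNb hQb
    have harith : k * lam + lam = (k + 1) * lam := by ring
    rwa [harith] at this

/-- Let `(R, m)` be a `1`-dimensional Cohen–Macaulay Noetherian local ring with infinite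
residue field and `x ∈ m^s` a parameter. Then `λ(R/(x)) ≥ s·e₀(m)`. -/
theorem length_ge_s_mul_e0
    (R : Type*) [CommRing R] [IsNoetherianRing R] [IsLocalRing R]
    [Infinite (ResidueField R)]
    (hdim : ringKrullDim R = 1) (hCM : IsCohenMacaulayLocalOfDim R 1)
    (s : ℕ) (hs : 1 ≤ s) (x : R) (hx : x ∈ (maximalIdeal R) ^ s)
    (hxreg : x ∈ nonZeroDivisors R)
    (e0 : ℤ) (he0 : HasMultiplicity (maximalIdeal R) 1 e0)
    (lam : ℕ) (hlam : mLength R (R ⧸ Ideal.span {x}) = (lam : WithBot ℕ∞)) :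
    (s : ℤ) * e0 ≤ lam := by
  obtain ⟨p, lamf, hdeg, hlenf, hev⟩ := he0
  -- the polynomial is constant
  set c : ℚ := p.coeff 0 with hc
  have hpc : ∀ q : ℚ, p.eval q = c := by
    intro q
    have h0 : p.degree ≤ 0 := Nat.WithBot.lt_one_iff_le_zero.mp (by exact_mod_cast hdeg)
    rw [Polynomial.eq_C_of_degree_le_zero h0, Polynomial.eval_C]
  -- natural-number bound : lamf (s*n) ≤ n * lam
  have hkey : ∀ n : ℕ, lamf (s * n) ≤ n * lam := by
    intro n
    have hle : (Ideal.span {x} : Ideal R) ^ n ≤ (maximalIdeal R) ^ (s * n) := by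
      rw [Ideal.span_singleton_pow, Ideal.span_le, Set.singleton_subset_iff]
      have : x ^ n ∈ ((maximalIdeal R) ^ s) ^ n := Ideal.pow_mem_pow hx n
      rwa [← pow_mul] at this
    have hsurj : Function.Surjective
        (Submodule.mapQ ((Ideal.span {x} : Ideal R) ^ n) ((maximalIdeal R) ^ (s * n))
          LinearMap.id (by simpa using hle)) := by
      intro y
      obtain ⟨r, rfl⟩ := Submodule.mkQ_surjective _ y
      exact ⟨Submodule.Quotient.mk r, rfl⟩
    have h1 : mLength R (R ⧸ (maximalIdeal R) ^ (s * n)) ≤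
        mLength R (R ⧸ (Ideal.span {x} : Ideal R) ^ n) :=
      mLength_le_of_surjective _ hsurj
    have h2 := key_pow_bound x hxreg lam (by exact_mod_cast hlam) n
    have h3 : ((lamf (s * n) : ℕ∞) : WithBot ℕ∞) ≤ (((n * lam : ℕ) : ℕ∞) : WithBot ℕ∞) := by
      calc ((lamf (s * n) : ℕ∞) : WithBot ℕ∞)
          = mLength R (R ⧸ (maximalIdeal R) ^ (s * n)) := by
            rw [hlenf (s * n)]; norm_cast
        _ ≤ _ := h1.trans h2
    exact_mod_cast h3
  -- eventual formula
  obtain ⟨N, hN⟩ := eventually_atTop.mp hev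
  by_contra hcon
  push_neg at hcon
  have hge : (lam : ℤ) + 1 ≤ (s : ℤ) * e0 := hcon
  set n : ℕ := max N (⌈-c⌉₊ + 1) with hn
  have hsn : s * n ≥ N := le_trans (le_max_left _ _) (Nat.le_mul_of_pos_left n hs)
  have heq := hN (s * n) hsn
  have hcast : ((s * n : ℕ) + 1 - 1).choose 1 = s * n := by simp
  rw [hcast, hpc] at heq
  -- heq : (lamf (s*n) : ℚ) = e0 * (s*n) + c
  have hub : (lamf (s * n) : ℚ) ≤ (n : ℚ) * lam := by exact_mod_cast hkey n
  have hlb : ((lam : ℚ) + 1) * n + c ≤ (lamf (s * n) : ℚ) := by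
    rw [heq]
    have h1 : ((lam : ℚ) + 1) * n ≤ (e0 : ℚ) * ((s : ℚ) * n) := by
      have : ((lam : ℚ) + 1) ≤ (e0 : ℚ) * s := by
        have h : ((lam : ℤ) + 1 : ℚ) ≤ (((s : ℤ) * e0 : ℤ) : ℚ) := by exact_mod_cast hge
        push_cast at h
        linarith
      have hn0 : (0 : ℚ) ≤ n := Nat.cast_nonneg n
      nlinarith
    push_cast
    linarith
  have hfin : (n : ℚ) ≤ -c := by
    have := hlb.trans hub
    nlinarith
  have hbig' : ⌈-c⌉₊ + 1 ≤ n := le_max_right N (⌈-c⌉₊ + 1)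
  have hbig : (⌈-c⌉₊ : ℚ) + 1 ≤ (n : ℚ) := by exact_mod_cast hbig'

  have : -c ≤ (⌈-c⌉₊ : ℚ) := Nat.le_ceil _
  linarith
end
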